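/- arXiv:1501.06862 — 8 statements merged into one kernel-verified Lean document; each statement's English description precedes it below -/
import Mathlib

section
/- Let C ∈ DH[t] be a monic generic motion polynomial of degree n. Then there exist h₁, …, hₙ ∈ DH such that each linear polynomial t − hᵢ is a rotation polynomial, i.e., hᵢ + h̄ᵢ ∈ ℝ, hᵢh̄ᵢ ∈ ℝ and the primal part of hᵢ is not real, and C = (t − h₁)·(t − h₂)⋯(t − hₙ). -/
open Polynomial
noncomputable section

/-- The dual quaternions: dual numbers over the real quaternions. -/
abbrev DH : Type := DualNumber (Quaternion ℝ)

/-- Dual quaternion conjugation: the conjugate of `p + εq` is `p̄ + εq̄`. -/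
def dconj (h : DH) : DH :=
  TrivSqZeroExt.inl (star (TrivSqZeroExt.fst h)) + TrivSqZeroExt.inr (star (TrivSqZeroExt.snd h))

/-- Coefficientwise conjugation of a dual quaternion polynomial. -/
def pconj (P : Polynomial DH) : Polynomial DH :=
  P.sum fun n a => Polynomial.monomial n (dconj a)

/-- The quaternion unit i. -/
def qi : Quaternion ℝ := ⟨0,1,0,0⟩
/-- The quaternion unit j. -/
def qj : Quaternion ℝ := ⟨0,0,1,0⟩
/-- The quaternion unit k. -/
def qk : Quaternion ℝ := ⟨0,0,0,1⟩

/-- A dual quaternion polynomial is real if all its coefficients are real scalars. -/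
def IsRealPoly (P : Polynomial DH) : Prop :=
  ∃ r : Polynomial ℝ, P = r.map (algebraMap ℝ DH)

/-- The primal part of a dual quaternion polynomial. -/
def primalPart (C : Polynomial DH) : Polynomial (Quaternion ℝ) :=
  C.sum fun n a => Polynomial.monomial n (TrivSqZeroExt.fst a)


/-- A motion polynomial: the leading coefficient is invertible and the norm
polynomial `C·C̄` is real. -/
def IsMotionPoly (C : Polynomial DH) : Prop :=
  IsUnit C.leadingCoeff ∧ IsRealPoly (C * pconj C)

/-- `C = P + εQ` is generic if its primal part `P` has no nonconstant real factor. -/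
def IsGeneric (C : Polynomial DH) : Prop :=
  ¬ ∃ r : Polynomial ℝ, 0 < r.natDegree ∧ r.map (algebraMap ℝ (Quaternion ℝ)) ∣ primalPart C

/-- `t - h` is a rotation polynomial: `h + h̄ ∈ ℝ`, `h·h̄ ∈ ℝ` and the primal part of
`h` is not real. -/
def IsRotationQuat (h : DH) : Prop :=
  (∃ r : ℝ, h + dconj h = algebraMap ℝ DH r) ∧
  (∃ r : ℝ, h * dconj h = algebraMap ℝ DH r) ∧
  ¬ ∃ r : ℝ, TrivSqZeroExt.fst h = algebraMap ℝ (Quaternion ℝ) r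

namespace MotionFactorization

open TrivSqZeroExt

/- ### dconj API -/

lemma DH.ext {x y : DH} (h1 : fst x = fst y) (h2 : snd x = snd y) : x = y :=
  TrivSqZeroExt.ext h1 h2

@[simp] lemma dconj_fst (h : DH) : fst (dconj h) = star (fst h) := by simp [dconj]
@[simp] lemma dconj_snd (h : DH) : snd (dconj h) = star (snd h) := by simp [dconj]

lemma dconj_add (x y : DH) : dconj (x + y) = dconj x + dconj y := by
  apply DH.ext <;> simp [star_add]

lemma dconj_mul (x y : DH) : dconj (x * y) = dconj y * dconj x := by
  apply DH.ext <;> simp [TrivSqZeroExt.fst_mul, TrivSqZeroExt.snd_mul, star_mul, smul_eq_mul,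
    MulOpposite.smul_eq_mul_unop, add_comm]

@[simp] lemma dconj_one : dconj 1 = 1 := by apply DH.ext <;> simp
@[simp] lemma dconj_zero : dconj 0 = 0 := by apply DH.ext <;> simp
@[simp] lemma dconj_dconj (x : DH) : dconj (dconj x) = x := by apply DH.ext <;> simp
lemma dconj_neg (x : DH) : dconj (-x) = - dconj x := by apply DH.ext <;> simp
@[simp] lemma dconj_algebraMap (r : ℝ) : dconj (algebraMap ℝ DH r) = algebraMap ℝ DH r := by
  apply DH.ext <;> simp [TrivSqZeroExt.algebraMap_eq_inl']
@[simp] lemma dconj_eq_zero_iff (x : DH) : dconj x = 0 ↔ x = 0 := by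
  constructor
  · intro h
    have h1 := congrArg TrivSqZeroExt.fst h
    have h2 := congrArg TrivSqZeroExt.snd h
    simp only [dconj_fst, dconj_snd, fst_zero, snd_zero, star_eq_zero] at h1 h2
    exact DH.ext (by simp [h1]) (by simp [h2])
  · rintro rfl; simp

/- ### pconj API -/

@[simp] lemma pconj_coeff (P : Polynomial DH) (k : ℕ) :
    (pconj P).coeff k = dconj (P.coeff k) := by
  rw [pconj, Polynomial.coeff_sum, Polynomial.sum_def]
  simp only [Polynomial.coeff_monomial]
  rw [Finset.sum_ite_eq' P.support k fun n => dconj (P.coeff n)]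
  split_ifs with h
  · rfl
  · rw [Polynomial.notMem_support_iff.mp h]; simp

lemma pconj_add (P Q : Polynomial DH) : pconj (P + Q) = pconj P + pconj Q := by
  apply Polynomial.ext; intro k; simp [dconj_add]

lemma pconj_mul (P Q : Polynomial DH) : pconj (P * Q) = pconj Q * pconj P := by
  apply Polynomial.ext; intro k
  simp only [pconj_coeff, Polynomial.coeff_mul]
  rw [show dconj (∑ x ∈ Finset.HasAntidiagonal.antidiagonal k, P.coeff x.1 * Q.coeff x.2)
      = ∑ x ∈ Finset.HasAntidiagonal.antidiagonal k, dconj (P.coeff x.1 * Q.coeff x.2) from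
    map_sum (AddMonoidHom.mk' dconj dconj_add) _ _]
  rw [← Finset.Nat.sum_antidiagonal_swap]
  apply Finset.sum_congr rfl
  intro x _
  simp [dconj_mul]

@[simp] lemma pconj_one : pconj (1 : Polynomial DH) = 1 := by
  apply Polynomial.ext; intro k
  simp only [pconj_coeff, Polynomial.coeff_one]
  split_ifs <;> simp

@[simp] lemma pconj_X : pconj (X : Polynomial DH) = X := by
  apply Polynomial.ext; intro k
  simp only [pconj_coeff, Polynomial.coeff_X]
  split_ifs <;> simp

@[simp] lemma pconj_C (a : DH) : pconj (Polynomial.C a) = Polynomial.C (dconj a) := by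
  apply Polynomial.ext; intro k
  simp only [pconj_coeff, Polynomial.coeff_C]
  split_ifs <;> simp

lemma pconj_sub (P Q : Polynomial DH) : pconj (P - Q) = pconj P - pconj Q := by
  apply Polynomial.ext; intro k; simp [sub_eq_add_neg, dconj_add, dconj_neg]

lemma pconj_map (r : Polynomial ℝ) :
    pconj (r.map (algebraMap ℝ DH)) = r.map (algebraMap ℝ DH) := by
  apply Polynomial.ext; intro k; simp [Polynomial.coeff_map]

lemma pconj_pconj (P : Polynomial DH) : pconj (pconj P) = P := by
  apply Polynomial.ext; intro k; simp

lemma degree_pconj_le (P : Polynomial DH) : (pconj P).degree ≤ P.degree := by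
  rw [Polynomial.degree_le_iff_coeff_zero]
  intro m hm
  rw [pconj_coeff, Polynomial.coeff_eq_zero_of_degree_lt hm]
  simp

lemma degree_pconj (P : Polynomial DH) : (pconj P).degree = P.degree :=
  le_antisymm (degree_pconj_le P) (by
    have := degree_pconj_le (pconj P)
    rwa [pconj_pconj] at this)

lemma natDegree_pconj (P : Polynomial DH) : (pconj P).natDegree = P.natDegree := by
  unfold Polynomial.natDegree
  rw [degree_pconj]

lemma monic_pconj {P : Polynomial DH} (hP : P.Monic) : (pconj P).Monic := by
  have h : (pconj P).leadingCoeff = dconj P.leadingCoeff := by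
    rw [Polynomial.leadingCoeff, natDegree_pconj, pconj_coeff]; rfl
  rw [Polynomial.Monic, h, hP.leadingCoeff, dconj_one]

/- ### primalPart API -/

def fstRH : DH →+* Quaternion ℝ := (TrivSqZeroExt.fstHom ℝ (Quaternion ℝ) (Quaternion ℝ)).toRingHom

@[simp] lemma fstRH_apply (x : DH) : fstRH x = fst x := rfl

lemma primalPart_coeff (P : Polynomial DH) (k : ℕ) :
    (primalPart P).coeff k = fst (P.coeff k) := by
  rw [primalPart, Polynomial.coeff_sum, Polynomial.sum_def]
  simp only [Polynomial.coeff_monomial]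
  rw [Finset.sum_ite_eq' P.support k fun n => fst (P.coeff n)]
  split_ifs with h
  · rfl
  · rw [Polynomial.notMem_support_iff.mp h]; simp

lemma primalPart_eq_map (P : Polynomial DH) : primalPart P = P.map fstRH := by
  apply Polynomial.ext; intro k
  rw [primalPart_coeff, Polynomial.coeff_map, fstRH_apply]

lemma primalPart_mul (P Q : Polynomial DH) :
    primalPart (P * Q) = primalPart P * primalPart Q := by
  simp [primalPart_eq_map, Polynomial.map_mul]

lemma primalPart_add (P Q : Polynomial DH) :
    primalPart (P + Q) = primalPart P + primalPart Q := by
  simp [primalPart_eq_map, Polynomial.map_add]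

@[simp] lemma primalPart_C (a : DH) : primalPart (Polynomial.C a) = Polynomial.C (fst a) := by
  simp [primalPart_eq_map]

@[simp] lemma primalPart_X : primalPart (X : Polynomial DH) = X := by
  simp [primalPart_eq_map]

@[simp] lemma primalPart_zero : primalPart (0 : Polynomial DH) = 0 := by
  simp [primalPart_eq_map]

lemma primalPart_sub (P Q : Polynomial DH) :
    primalPart (P - Q) = primalPart P - primalPart Q := by
  simp [primalPart_eq_map, Polynomial.map_sub]

lemma primalPart_map (r : Polynomial ℝ) :
    primalPart (r.map (algebraMap ℝ DH)) = r.map (algebraMap ℝ (Quaternion ℝ)) := by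
  rw [primalPart_eq_map, Polynomial.map_map]
  have h : fstRH.comp (algebraMap ℝ DH) = algebraMap ℝ (Quaternion ℝ) := by
    apply RingHom.ext; intro x
    show fstRH (algebraMap ℝ DH x) = _
    rw [TrivSqZeroExt.algebraMap_eq_inl', fstRH_apply, TrivSqZeroExt.fst_inl]
  rw [h]

/- ### centrality of real polynomials -/

lemma map_algebraMap_comm {A : Type} [Ring A] [Algebra ℝ A] (r : Polynomial ℝ) (P : Polynomial A) :
    r.map (algebraMap ℝ A) * P = P * r.map (algebraMap ℝ A) := by
  apply Polynomial.ext; intro k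
  rw [Polynomial.coeff_mul, Polynomial.coeff_mul, ← Finset.Nat.sum_antidiagonal_swap]
  apply Finset.sum_congr rfl
  intro x _
  simp only [Prod.fst_swap, Prod.snd_swap, Polynomial.coeff_map]
  exact (Algebra.commutes _ _)

/- ### auxiliary small facts -/

lemma fst_eq_zero_of_mul_dconj_eq_zero {b : DH} (h : b * dconj b = 0) : fst b = 0 := by
  have h1 : fst b * star (fst b) = 0 := by
    have := congrArg fst h
    rwa [TrivSqZeroExt.fst_mul, dconj_fst, fst_zero] at this
  rw [Quaternion.self_mul_star] at h1
  have h2 : Quaternion.normSq (fst b) = 0 := by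
    rw [← Quaternion.coe_zero, Quaternion.coe_inj] at h1
    exact h1
  exact Quaternion.normSq_eq_zero.mp h2


lemma quat_eq_zero_of_self_mul_star {x : Quaternion ℝ} (h : x * star x = 0) : x = 0 := by
  rw [Quaternion.self_mul_star] at h
  rw [← Quaternion.coe_zero, Quaternion.coe_inj] at h
  exact Quaternion.normSq_eq_zero.mp h

lemma expand_linmul (x y : DH) :
    (X - Polynomial.C x) * (X - Polynomial.C y)
      = X^2 - Polynomial.C (x + y) * X + Polynomial.C (x * y) := by
  rw [sub_mul, mul_sub, mul_sub, Polynomial.X_mul_C, ← Polynomial.C_mul,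
    Polynomial.C_add, add_mul, sq]
  noncomm_ring

/- ### main extraction lemma -/

set_option maxHeartbeats 2000000 in
lemma exists_right_factor {C : Polynomial DH} (hmonic : C.Monic) (hd : 0 < C.natDegree)
    (hmotion : IsMotionPoly C) (hgen : IsGeneric C) :
    ∃ (C' : Polynomial DH) (h : DH), IsRotationQuat h ∧ C = C' * (X - Polynomial.C h) ∧
      C'.Monic ∧ C'.natDegree = C.natDegree - 1 ∧ IsMotionPoly C' ∧ IsGeneric C' := by
  obtain ⟨-, νr, hνr⟩ := hmotion
  have hρinj : Function.Injective (algebraMap ℝ DH) := RingHom.injective _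
  have hpcm : (pconj C).Monic := monic_pconj hmonic
  have hνmonic : (C * pconj C).Monic := hmonic.mul hpcm
  have hνrmonic : νr.Monic := by
    have h1 : (νr.map (algebraMap ℝ DH)).leadingCoeff = algebraMap ℝ DH νr.leadingCoeff :=
      Polynomial.leadingCoeff_map_of_injective hρinj νr
    have h2 := hνmonic.leadingCoeff
    rw [hνr, h1] at h2
    exact hρinj (h2.trans (map_one (algebraMap ℝ DH)).symm)
  have hνrdeg : νr.natDegree = 2 * C.natDegree := by
    have h1 : (C * pconj C).natDegree = C.natDegree + C.natDegree := by
      rw [hmonic.natDegree_mul hpcm, natDegree_pconj]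
    have h2 : (νr.map (algebraMap ℝ DH)).natDegree = νr.natDegree :=
      Polynomial.natDegree_map_eq_of_injective hρinj νr
    rw [hνr, h2] at h1
    omega
  have hνrnotunit : ¬ IsUnit νr := fun hu => by
    have := Polynomial.natDegree_eq_zero_of_isUnit hu; omega
  obtain ⟨M₀, hM₀irr, hM₀dvd⟩ := WfDvdMonoid.exists_irreducible_factor hνrnotunit hνrmonic.ne_zero
  set M : Polynomial ℝ := normalize M₀ with hMdef
  have hMmonic : M.Monic := Polynomial.monic_normalize hM₀irr.ne_zero
  have hMirr : Irreducible M := (associated_normalize M₀).irreducible hM₀irr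
  have hMdvd : M ∣ νr := normalize_dvd_iff.mpr hM₀dvd
  have hM1 : 1 ≤ M.natDegree := by
    by_contra hcon
    push_neg at hcon
    have h0 : M.natDegree = 0 := by omega
    exact hMirr.not_isUnit (by rw [hMmonic.natDegree_eq_zero.mp h0]; exact isUnit_one)
  have hM2 : M.natDegree ≤ 2 := hMirr.natDegree_le_two
  -- set up division by `MD`
  set MD : Polynomial DH := M.map (algebraMap ℝ DH) with hMDdef
  have hMDmonic : MD.Monic := hMmonic.map _
  have hMDdeg : MD.natDegree = M.natDegree := Polynomial.natDegree_map_eq_of_injective hρinj M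
  set R : Polynomial DH := C %ₘ MD with hRdef
  set C₁ : Polynomial DH := C /ₘ MD with hC₁def
  have hCR : C = MD * C₁ + R := by
    conv_lhs => rw [← Polynomial.modByMonic_add_div C MD]
    rw [add_comm]
  have hRdeg : R.degree < MD.degree := Polynomial.degree_modByMonic_lt C hMDmonic
  have hMDcomm : ∀ P : Polynomial DH, MD * P = P * MD := fun P => map_algebraMap_comm M P
  have hpMD : pconj MD = MD := pconj_map M
  obtain ⟨w, hw⟩ := hMdvd
  have hνfact : C * pconj C = MD * (w.map (algebraMap ℝ DH)) := by
    rw [hνr, hw, Polynomial.map_mul]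
  set S : Polynomial DH :=
    w.map (algebraMap ℝ DH) - (C₁ * pconj C₁ * MD + C₁ * pconj R + R * pconj C₁) with hSdef
  have hRS : R * pconj R = MD * S := by
    have expand : C * pconj C
        = MD * (C₁ * pconj C₁ * MD + C₁ * pconj R + R * pconj C₁) + R * pconj R := by
      conv_lhs => rw [hCR]
      rw [pconj_add, pconj_mul, hpMD]
      have h1 : R * (pconj C₁ * MD) = MD * (R * pconj C₁) := by
        rw [← mul_assoc, ← hMDcomm]
      calc (MD * C₁ + R) * (pconj C₁ * MD + pconj R)
          = MD * C₁ * (pconj C₁ * MD) + MD * C₁ * pconj R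
            + (R * (pconj C₁ * MD) + R * pconj R) := by noncomm_ring
        _ = MD * (C₁ * pconj C₁ * MD) + MD * (C₁ * pconj R)
            + (MD * (R * pconj C₁) + R * pconj R) := by rw [h1]; noncomm_ring
        _ = MD * (C₁ * pconj C₁ * MD + C₁ * pconj R + R * pconj C₁) + R * pconj R := by
            noncomm_ring
    rw [hSdef, mul_sub, ← hνfact, expand]
    abel
  have hprimalMD : primalPart MD = M.map (algebraMap ℝ (Quaternion ℝ)) := primalPart_map M
  have hgencontra : primalPart R ≠ 0 := by
    intro h0
    apply hgen
    refine ⟨M, by omega, primalPart C₁, ?_⟩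
    rw [hCR, primalPart_add, primalPart_mul, h0, add_zero, hprimalMD]
  -- rule out a linear factor: `M` is quadratic
  have hMdeg2 : M.natDegree = 2 := by
    rcases (by omega : M.natDegree = 1 ∨ M.natDegree = 2) with h1 | h2
    · exfalso
      have hMDdeg1 : MD.degree = 1 := by
        rw [Polynomial.degree_eq_natDegree hMDmonic.ne_zero, hMDdeg, h1]; rfl
      have hR0 : R.degree ≤ 0 := by
        rw [hMDdeg1] at hRdeg
        exact Nat.WithBot.lt_one_iff_le_zero.mp hRdeg
      have hS0 : S = 0 := by
        by_contra hS0
        have hdeg : (MD * S).degree = MD.degree + S.degree :=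
          Polynomial.degree_mul' (by
            rw [hMDmonic.leadingCoeff, one_mul]
            exact Polynomial.leadingCoeff_ne_zero.mpr hS0)
        have hge : (1 : WithBot ℕ) ≤ (MD * S).degree := by
          rw [hdeg, hMDdeg1]
          calc (1 : WithBot ℕ) = 1 + 0 := by rw [add_zero]
            _ ≤ 1 + S.degree := add_le_add_right (Polynomial.zero_le_degree_iff.mpr hS0) 1
        have hle : (R * pconj R).degree ≤ 0 := by
          refine le_trans (Polynomial.degree_mul_le _ _) ?_
          rw [degree_pconj]
          calc R.degree + R.degree ≤ 0 + 0 := add_le_add hR0 hR0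
            _ = 0 := by rw [add_zero]
        rw [hRS] at hle
        exact absurd (le_trans hge hle) (by norm_num)
      rw [hS0, mul_zero] at hRS
      have hRb : R = Polynomial.C (R.coeff 0) := Polynomial.eq_C_of_degree_le_zero hR0
      have hb0 : R.coeff 0 * dconj (R.coeff 0) = 0 := by
        have := hRS
        rw [hRb, pconj_C, ← Polynomial.C_mul] at this
        exact_mod_cast Polynomial.C_eq_zero.mp this
      have hfb : TrivSqZeroExt.fst (R.coeff 0) = 0 := by
        apply quat_eq_zero_of_self_mul_star
        have := congrArg TrivSqZeroExt.fst hb0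
        rwa [TrivSqZeroExt.fst_mul, dconj_fst, fst_zero] at this
      apply hgencontra
      rw [hRb, primalPart_C, hfb, map_zero]
    · exact h2
  have hMDdeg2 : MD.degree = 2 := by
    rw [Polynomial.degree_eq_natDegree hMDmonic.ne_zero, hMDdeg, hMdeg2]; rfl
  have hRle1 : R.degree ≤ 1 := by
    by_cases hR0 : R = 0
    · rw [hR0]; simp
    · rw [hMDdeg2] at hRdeg
      have h2 : R.natDegree < 2 := by
        rwa [Polynomial.natDegree_lt_iff_degree_lt hR0]
        -- might need cast fix
      have h3 : R.natDegree ≤ 1 := by omega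
      rw [Polynomial.degree_eq_natDegree hR0]
      exact_mod_cast h3
  set a : DH := R.coeff 1 with hadef
  set b : DH := R.coeff 0 with hbdef
  have hRab : R = Polynomial.C a * X + Polynomial.C b :=
    Polynomial.eq_X_add_C_of_degree_le_one hRle1
  have hSdeg : S.degree ≤ 0 := by
    by_cases hS0 : S = 0
    · rw [hS0]; simp
    · have hdeg : (MD * S).degree = 2 + S.degree := by
        rw [Polynomial.degree_mul' (by
          rw [hMDmonic.leadingCoeff, one_mul]
          exact Polynomial.leadingCoeff_ne_zero.mpr hS0), hMDdeg2]
      have hle2 : (MD * S).degree ≤ 2 := by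
        rw [← hRS]
        refine le_trans (Polynomial.degree_mul_le _ _) ?_
        rw [degree_pconj]
        calc R.degree + R.degree ≤ 1 + 1 := add_le_add hRle1 hRle1
          _ = 2 := by norm_num
      rw [hdeg] at hle2
      have := WithBot.le_of_add_le_add_left (by norm_num : (2 : WithBot ℕ) ≠ ⊥)
        (by rw [add_zero]; exact hle2 : (2 : WithBot ℕ) + S.degree ≤ 2 + 0)
      exact this
  set e : DH := S.coeff 0 with hedef
  have hSe : S = Polynomial.C e := Polynomial.eq_C_of_degree_le_zero hSdeg
  -- `a` is invertible
  have hfa : TrivSqZeroExt.fst a ≠ 0 := by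
    intro hfa0
    have hpR : primalPart R = Polynomial.C (TrivSqZeroExt.fst b) := by
      rw [hRab, primalPart_add, primalPart_mul, primalPart_C, primalPart_X, hfa0]
      simp
    have hpRconj : primalPart (pconj R) = Polynomial.C (star (TrivSqZeroExt.fst b)) := by
      rw [hRab, pconj_add, pconj_mul, pconj_C, pconj_X, pconj_C, primalPart_add,
        primalPart_mul, primalPart_X, primalPart_C, primalPart_C, dconj_fst, dconj_fst, hfa0]
      simp
    have heq : Polynomial.C (TrivSqZeroExt.fst b * star (TrivSqZeroExt.fst b))
        = M.map (algebraMap ℝ (Quaternion ℝ)) * Polynomial.C (TrivSqZeroExt.fst e) := by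
      have h1 := congrArg primalPart hRS
      rw [primalPart_mul, hpR, hpRconj, hSe, primalPart_mul, hprimalMD, primalPart_C,
        ← Polynomial.C_mul] at h1
      exact h1
    have hfe : TrivSqZeroExt.fst e = 0 := by
      by_contra hfe
      have hMℍmonic : (M.map (algebraMap ℝ (Quaternion ℝ))).Monic := hMmonic.map _
      have hMℍdeg : (M.map (algebraMap ℝ (Quaternion ℝ))).degree = 2 := by
        rw [Polynomial.degree_eq_natDegree hMℍmonic.ne_zero,
          Polynomial.natDegree_map_eq_of_injective (RingHom.injective _) M, hMdeg2]; rfl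
      have hdeg2 : (M.map (algebraMap ℝ (Quaternion ℝ))
          * Polynomial.C (TrivSqZeroExt.fst e)).degree = 2 := by
        rw [Polynomial.degree_mul' (by
          rw [hMℍmonic.leadingCoeff, one_mul, Polynomial.leadingCoeff_C]
          exact hfe), hMℍdeg, Polynomial.degree_C hfe, add_zero]
      have hle0 : (Polynomial.C (TrivSqZeroExt.fst b * star (TrivSqZeroExt.fst b))).degree ≤ 0 :=
        Polynomial.degree_C_le
      rw [heq, hdeg2] at hle0
      norm_num at hle0
    rw [hfe, map_zero, mul_zero] at heq
    have hfb : TrivSqZeroExt.fst b = 0 :=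
      quat_eq_zero_of_self_mul_star (Polynomial.C_eq_zero.mp heq)
    apply hgencontra
    have hpR' : primalPart R = Polynomial.C (TrivSqZeroExt.fst b) := hpR
    rw [hpR', hfb, map_zero]
  have haunit : IsUnit a := by
    rw [TrivSqZeroExt.isUnit_iff_isUnit_fst]
    exact isUnit_iff_ne_zero.mpr hfa
  obtain ⟨ua, hua⟩ := haunit
  set u : DH := ((ua⁻¹ : DHˣ) : DH) with hudef
  have hu1 : u * a = 1 := by rw [hudef, ← hua]; exact Units.inv_mul ua
  have hu2 : a * u = 1 := by rw [hudef, ← hua]; exact Units.mul_inv ua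
  set h : DH := -(u * b) with hhdef
  have hRfac : R = Polynomial.C a * (X - Polynomial.C h) := by
    rw [hhdef, mul_sub, ← Polynomial.C_mul, mul_neg, ← mul_assoc, hu2, one_mul,
      Polynomial.C_neg, sub_neg_eq_add, ← hRab]
  set hbar : DH := dconj h with hbardef
  set Z : Polynomial DH := (X - Polynomial.C h) * (X - Polynomial.C hbar) with hZdef
  have hZexp : Z = X^2 - Polynomial.C (h + hbar) * X + Polynomial.C (h * hbar) :=
    expand_linmul h hbar
  have hRpconj : pconj R = (X - Polynomial.C hbar) * Polynomial.C (dconj a) := by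
    rw [hRfac, pconj_mul, pconj_sub, pconj_X, pconj_C, pconj_C, ← hbardef]
  have hZMD : Z = MD * Polynomial.C (u * e * dconj u) := by
    have h1 : Polynomial.C a * Z * Polynomial.C (dconj a) = MD * Polynomial.C e := by
      calc Polynomial.C a * Z * Polynomial.C (dconj a)
          = (Polynomial.C a * (X - Polynomial.C h))
            * ((X - Polynomial.C hbar) * Polynomial.C (dconj a)) := by
            rw [hZdef]; noncomm_ring
        _ = R * pconj R := by rw [← hRfac, ← hRpconj]
        _ = MD * S := hRS
        _ = MD * Polynomial.C e := by rw [← hSe]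
    have hud : dconj a * dconj u = 1 := by rw [← dconj_mul, hu1, dconj_one]
    calc Z = (Polynomial.C u * Polynomial.C a) * Z
            * (Polynomial.C (dconj a) * Polynomial.C (dconj u)) := by
          rw [← Polynomial.C_mul, ← Polynomial.C_mul, hu1, hud, Polynomial.C_1, one_mul, mul_one]
      _ = Polynomial.C u * (Polynomial.C a * Z * Polynomial.C (dconj a)) * Polynomial.C (dconj u) := by
          noncomm_ring
      _ = Polynomial.C u * (MD * Polynomial.C e) * Polynomial.C (dconj u) := by rw [h1]
      _ = MD * Polynomial.C (u * e * dconj u) := by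
          rw [show Polynomial.C u * (MD * Polynomial.C e) * Polynomial.C (dconj u)
              = (Polynomial.C u * MD) * (Polynomial.C e * Polynomial.C (dconj u)) from by
            noncomm_ring]
          rw [← hMDcomm (Polynomial.C u), mul_assoc, ← Polynomial.C_mul, ← Polynomial.C_mul,
            mul_assoc]
  have hMDc2 : MD.coeff 2 = 1 := by
    have : MD.coeff MD.natDegree = 1 := hMDmonic.coeff_natDegree
    rwa [hMDdeg, hMdeg2] at this
  have hw2 : u * e * dconj u = 1 := by
    have h2 := congrArg (fun p => Polynomial.coeff p 2) hZMD
    simp only [hZexp] at h2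
    rw [Polynomial.coeff_mul_C] at h2
    simp only [Polynomial.coeff_add, Polynomial.coeff_sub, Polynomial.coeff_X_pow,
      Polynomial.coeff_C_mul, Polynomial.coeff_X, Polynomial.coeff_C] at h2
    norm_num at h2
    rw [hMDc2, one_mul] at h2
    exact h2.symm
  have hZ_MD : Z = MD := by rw [hZMD, hw2, Polynomial.C_1, mul_one]
  have hZexp' : X^2 - Polynomial.C (h + hbar) * X + Polynomial.C (h * hbar) = MD := by
    rw [← hZexp, hZ_MD]
  have hsum : h + hbar = algebraMap ℝ DH (-(M.coeff 1)) := by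
    have h1 := congrArg (fun p => Polynomial.coeff p 1) hZexp'
    simp only [Polynomial.coeff_add, Polynomial.coeff_sub, Polynomial.coeff_X_pow,
      Polynomial.coeff_C_mul, Polynomial.coeff_X, Polynomial.coeff_C] at h1
    norm_num at h1
    rw [hMDdef, Polynomial.coeff_map] at h1
    rw [map_neg, ← h1, neg_neg, hhdef]
    abel
  have hprod : h * hbar = algebraMap ℝ DH (M.coeff 0) := by
    have h1 := congrArg (fun p => Polynomial.coeff p 0) hZexp'
    simp only [Polynomial.coeff_add, Polynomial.coeff_sub, Polynomial.coeff_X_pow,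
      Polynomial.coeff_C_mul, Polynomial.coeff_X, Polynomial.coeff_C] at h1
    norm_num at h1
    rw [hMDdef, Polynomial.coeff_map] at h1
    exact h1
  have hcomm2 : hbar * h = h * hbar := by
    have hc : (h + hbar) * h = h * (h + hbar) := by
      rw [hsum]; exact Algebra.commutes _ _
    rw [add_mul, mul_add] at hc
    exact add_left_cancel hc
  have hZ' : (X - Polynomial.C hbar) * (X - Polynomial.C h) = MD := by
    rw [expand_linmul, add_comm hbar h, hcomm2, hZexp']
  -- the factorization
  set C' : Polynomial DH := C₁ * (X - Polynomial.C hbar) + Polynomial.C a with hC'def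
  have hfac : C = C' * (X - Polynomial.C h) := by
    rw [hC'def, add_mul, mul_assoc, hZ', ← hMDcomm C₁, ← hRfac, ← hCR]
  have hXh : (X - Polynomial.C h).Monic := Polynomial.monic_X_sub_C h
  have hC'ne : C' ≠ 0 := by
    intro h0
    rw [h0, zero_mul] at hfac
    exact hmonic.ne_zero hfac
  have hC'monic : C'.Monic := by
    have hlc : C.leadingCoeff = C'.leadingCoeff * (X - Polynomial.C h).leadingCoeff := by
      rw [hfac]
      exact (Polynomial.leadingCoeff_mul' (by
        rw [hXh.leadingCoeff, mul_one]
        exact Polynomial.leadingCoeff_ne_zero.mpr hC'ne))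
    have := hmonic.leadingCoeff
    rw [hlc, hXh.leadingCoeff, mul_one] at this
    exact this
  have hC'deg : C'.natDegree = C.natDegree - 1 := by
    have hnd := hC'monic.natDegree_mul hXh
    rw [← hfac, Polynomial.natDegree_X_sub_C] at hnd
    omega
  have hpC : pconj C = (X - Polynomial.C hbar) * pconj C' := by
    rw [hfac, pconj_mul, pconj_sub, pconj_X, pconj_C, ← hbardef]
  have hν2 : C * pconj C = MD * (C' * pconj C') := by
    rw [hpC, hfac]
    calc C' * (X - Polynomial.C h) * ((X - Polynomial.C hbar) * pconj C')
        = C' * Z * pconj C' := by rw [hZdef]; noncomm_ring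
      _ = C' * MD * pconj C' := by rw [hZ_MD]
      _ = MD * (C' * pconj C') := by rw [← hMDcomm C', mul_assoc]
  have hreal : C' * pconj C' = w.map (algebraMap ℝ DH) := by
    have hcan : MD * (C' * pconj C') = MD * w.map (algebraMap ℝ DH) := by
      rw [← hν2, hνfact]
    exact hMDmonic.isRegular.left hcan
  have hC'motion : IsMotionPoly C' := ⟨by rw [hC'monic.leadingCoeff]; exact isUnit_one,
    w, hreal⟩
  have hprimalfac : primalPart C = primalPart C' * (X - Polynomial.C (TrivSqZeroExt.fst h)) := by
    rw [hfac, primalPart_mul, primalPart_sub, primalPart_X, primalPart_C]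
  have hC'gen : IsGeneric C' := by
    rintro ⟨s, hs, q, hq⟩
    exact hgen ⟨s, hs, q * (X - Polynomial.C (TrivSqZeroExt.fst h)), by
      rw [hprimalfac, hq, mul_assoc]⟩
  have hrot3 : ¬ ∃ r : ℝ, TrivSqZeroExt.fst h = algebraMap ℝ (Quaternion ℝ) r := by
    rintro ⟨r, hr⟩
    apply hgen
    refine ⟨X - Polynomial.C r, by rw [Polynomial.natDegree_X_sub_C]; omega, primalPart C', ?_⟩
    have hmapX : (X - Polynomial.C r : Polynomial ℝ).map (algebraMap ℝ (Quaternion ℝ))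
        = X - Polynomial.C (algebraMap ℝ (Quaternion ℝ) r) := by
      rw [Polynomial.map_sub, Polynomial.map_X, Polynomial.map_C]
    rw [hprimalfac, hr, ← hmapX, map_algebraMap_comm]
  exact ⟨C', h, ⟨⟨-(M.coeff 1), hsum⟩, ⟨M.coeff 0, hprod⟩, hrot3⟩, hfac, hC'monic, hC'deg,
    hC'motion, hC'gen⟩

end MotionFactorization

/-- A monic generic motion polynomial of degree `n` factors into `n` linear rotation
polynomials `(t - h₁)⋯(t - hₙ)`. -/
theorem generic_motion_polynomial_factorization (n : ℕ) (C : Polynomial DH)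
    (hmonic : C.Monic) (hdeg : C.natDegree = n)
    (hmotion : IsMotionPoly C) (hgen : IsGeneric C) :
    ∃ h : Fin n → DH, (∀ i, IsRotationQuat (h i)) ∧
      C = (List.ofFn fun i => X - Polynomial.C (h i)).prod := by
  induction n generalizing C with
  | zero =>
    refine ⟨Fin.elim0, fun i => i.elim0, ?_⟩
    have : C = 1 := hmonic.natDegree_eq_zero.mp hdeg
    simp [this]
  | succ n ih =>
    obtain ⟨C', h₀, hrot, hfac, hC'monic, hC'deg, hC'motion, hC'gen⟩ :=
      MotionFactorization.exists_right_factor hmonic (by omega) hmotion hgen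
    obtain ⟨h', hrot', hfac'⟩ := ih C' hC'monic (by omega) hC'motion hC'gen
    refine ⟨Fin.snoc h' h₀, ?_, ?_⟩
    · intro i
      refine Fin.lastCases ?_ ?_ i
      · simpa using hrot
      · intro j; simpa using hrot' j
    · rw [hfac, hfac']
      rw [List.ofFn_succ']
      simp only [Fin.snoc_castSucc, Fin.snoc_last, List.concat_eq_append, List.prod_append,
        List.prod_cons, List.prod_nil, mul_one]
end
end

section
/- Let C ∈ DH[t] be a monic generic motion polynomial of degree n, and let (M₁, …, Mₙ) be any tuple of monic irreducible quadratic polynomials in ℝ[t] such that C·C̄ = M₁·M₂⋯Mₙ. Then there exist h₁, …, hₙ ∈ DH such that C = (t − h₁)·(t − h₂)⋯(t − hₙ) and (t − hᵢ)·(t − h̄ᵢ) = Mᵢ for each i = 1, …, n. -/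
open Polynomial
noncomputable section

namespace Aux
open TrivSqZeroExt

@[simp] lemma fst_dconj (h : DH) : fst (dconj h) = star (fst h) := by
  simp [dconj]

@[simp] lemma snd_dconj (h : DH) : snd (dconj h) = star (snd h) := by
  simp [dconj]

@[simp] lemma dconj_zero : dconj (0 : DH) = 0 :=
  TrivSqZeroExt.ext (by simp) (by simp)

@[simp] lemma dconj_one : dconj (1 : DH) = 1 :=
  TrivSqZeroExt.ext (by simp) (by simp)

@[simp] lemma dconj_add (x y : DH) : dconj (x + y) = dconj x + dconj y :=
  TrivSqZeroExt.ext (by simp) (by simp)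

@[simp] lemma dconj_neg (x : DH) : dconj (-x) = - dconj x :=
  TrivSqZeroExt.ext (by simp) (by simp)

@[simp] lemma dconj_mul (x y : DH) : dconj (x * y) = dconj y * dconj x := by
  refine TrivSqZeroExt.ext (by simp) ?_
  simp only [snd_dconj, snd_mul, fst_dconj, fst_mul, smul_eq_mul, star_add, star_mul,
    MulOpposite.smul_eq_mul_unop, MulOpposite.unop_op, star_smul]
  rw [add_comm]

@[simp] lemma dconj_dconj (x : DH) : dconj (dconj x) = x :=
  TrivSqZeroExt.ext (by simp) (by simp)

@[simp] lemma fst_algebraMap (r : ℝ) : fst (algebraMap ℝ DH r) = (r : Quaternion ℝ) := by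
  rw [TrivSqZeroExt.algebraMap_eq_inl' (S := ℝ) (R := Quaternion ℝ) (M := Quaternion ℝ) r,
    fst_inl]
  rfl

@[simp] lemma snd_algebraMap (r : ℝ) : snd (algebraMap ℝ DH r) = 0 := by
  rw [TrivSqZeroExt.algebraMap_eq_inl' (S := ℝ) (R := Quaternion ℝ) (M := Quaternion ℝ) r,
    snd_inl]

@[simp] lemma dconj_algebraMap (r : ℝ) : dconj (algebraMap ℝ DH r) = algebraMap ℝ DH r := by
  refine TrivSqZeroExt.ext ?_ ?_
  · rw [fst_dconj, fst_algebraMap, Quaternion.star_coe]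
  · rw [snd_dconj, snd_algebraMap, star_zero]

lemma dconj_eq_zero {x : DH} : dconj x = 0 ↔ x = 0 := by
  constructor
  · intro h; have := congrArg dconj h; simpa using this
  · rintro rfl; simp

lemma isUnit_dconj {x : DH} (hx : IsUnit x) : IsUnit (dconj x) := by
  obtain ⟨u, rfl⟩ := hx
  exact ⟨⟨dconj ↑u, dconj ↑u⁻¹, by rw [← dconj_mul, Units.inv_mul, dconj_one],
    by rw [← dconj_mul, Units.mul_inv, dconj_one]⟩, rfl⟩

/-- self-conjugate dual quaternions are central -/
lemma commute_of_dconj_eq {d : DH} (hd : dconj d = d) (x : DH) : d * x = x * d := by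
  have h1 : fst d = ((fst d).re : Quaternion ℝ) := by
    rw [← Quaternion.star_eq_self, ← fst_dconj, hd]
  have h2 : snd d = ((snd d).re : Quaternion ℝ) := by
    rw [← Quaternion.star_eq_self, ← snd_dconj, hd]
  refine TrivSqZeroExt.ext ?_ ?_
  · rw [fst_mul, fst_mul, h1, Quaternion.coe_commutes]
  · simp only [snd_mul, smul_eq_mul, MulOpposite.smul_eq_mul_unop, MulOpposite.unop_op]
    rw [h1, h2, Quaternion.coe_commutes, Quaternion.coe_commutes, add_comm]

@[simp] lemma coeff_pconj (P : Polynomial DH) (k : ℕ) :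
    (pconj P).coeff k = dconj (P.coeff k) := by
  rw [pconj, Polynomial.sum_def, finset_sum_coeff]
  simp only [coeff_monomial]
  by_cases hk : k ∈ P.support
  · rw [Finset.sum_eq_single k]
    · simp
    · intro b _ hb; simp [hb]
    · intro h; exact absurd hk h
  · rw [Finset.sum_eq_zero, Polynomial.notMem_support_iff.mp hk, dconj_zero]
    intro b hb
    have hbk : b ≠ k := fun h => hk (h ▸ hb)
    simp [hbk]

@[simp] lemma coeff_primalPart (P : Polynomial DH) (k : ℕ) :
    (primalPart P).coeff k = fst (P.coeff k) := by
  rw [primalPart, Polynomial.sum_def, finset_sum_coeff]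
  simp only [coeff_monomial]
  by_cases hk : k ∈ P.support
  · rw [Finset.sum_eq_single k]
    · simp
    · intro b _ hb; simp [hb]
    · intro h; exact absurd hk h
  · rw [Finset.sum_eq_zero, Polynomial.notMem_support_iff.mp hk, fst_zero]
    intro b hb
    have hbk : b ≠ k := fun h => hk (h ▸ hb)
    simp [hbk]

lemma primalPart_eq_map (P : Polynomial DH) :
    primalPart P = P.map (TrivSqZeroExt.fstHom ℝ (Quaternion ℝ) (Quaternion ℝ)).toRingHom := by
  refine Polynomial.ext fun k => ?_
  simp [coeff_map]

@[simp] lemma primalPart_mul (P Q : Polynomial DH) :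
    primalPart (P * Q) = primalPart P * primalPart Q := by
  simp [primalPart_eq_map, Polynomial.map_mul]

@[simp] lemma primalPart_add (P Q : Polynomial DH) :
    primalPart (P + Q) = primalPart P + primalPart Q := by
  simp [primalPart_eq_map, Polynomial.map_add]

lemma primalPart_map_real (r : Polynomial ℝ) :
    primalPart (r.map (algebraMap ℝ DH)) = r.map (algebraMap ℝ (Quaternion ℝ)) := by
  refine Polynomial.ext fun k => ?_
  simp only [coeff_primalPart, coeff_map, fst_algebraMap]
  rfl

@[simp] lemma primalPart_X_sub_C (h : DH) :
    primalPart (X - Polynomial.C h) = X - Polynomial.C (fst h) := by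
  rw [primalPart_eq_map]
  simp

end Aux
namespace Aux
open TrivSqZeroExt

def dconjHom : DH →+ DH := ⟨⟨dconj, dconj_zero⟩, dconj_add⟩

@[simp] lemma dconjHom_apply (x : DH) : dconjHom x = dconj x := rfl

@[simp] lemma pconj_add (P Q : Polynomial DH) : pconj (P + Q) = pconj P + pconj Q :=
  Polynomial.ext fun k => by simp

@[simp] lemma pconj_neg (P : Polynomial DH) : pconj (-P) = - pconj P :=
  Polynomial.ext fun k => by simp

@[simp] lemma pconj_C (a : DH) : pconj (Polynomial.C a) = Polynomial.C (dconj a) :=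
  Polynomial.ext fun k => by simp [Polynomial.coeff_C, apply_ite dconj]

@[simp] lemma pconj_X : pconj (X : Polynomial DH) = X :=
  Polynomial.ext fun k => by simp [Polynomial.coeff_X, apply_ite dconj]

lemma pconj_mul (P Q : Polynomial DH) : pconj (P * Q) = pconj Q * pconj P := by
  refine Polynomial.ext fun k => ?_
  rw [coeff_pconj, coeff_mul, coeff_mul, ← Finset.Nat.sum_antidiagonal_swap]
  rw [show dconj = dconjHom from rfl, map_sum]
  refine Finset.sum_congr rfl fun x _ => ?_
  simp [Prod.fst_swap, Prod.snd_swap]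

@[simp] lemma pconj_pconj (P : Polynomial DH) : pconj (pconj P) = P :=
  Polynomial.ext fun k => by simp

@[simp] lemma pconj_map_real (r : Polynomial ℝ) :
    pconj (r.map (algebraMap ℝ DH)) = r.map (algebraMap ℝ DH) :=
  Polynomial.ext fun k => by simp [coeff_map]

@[simp] lemma pconj_X_sub_C (a : DH) :
    pconj (X - Polynomial.C a) = X - Polynomial.C (dconj a) := by
  rw [sub_eq_add_neg, pconj_add, pconj_neg, pconj_C, pconj_X, ← sub_eq_add_neg]

lemma support_pconj (P : Polynomial DH) : (pconj P).support = P.support := by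
  ext k; simp [Polynomial.mem_support_iff, dconj_eq_zero]

lemma degree_pconj (P : Polynomial DH) : (pconj P).degree = P.degree := by
  unfold Polynomial.degree
  rw [support_pconj]

lemma natDegree_pconj (P : Polynomial DH) : (pconj P).natDegree = P.natDegree := by
  unfold Polynomial.natDegree
  rw [degree_pconj]

lemma monic_pconj {P : Polynomial DH} (hP : P.Monic) : (pconj P).Monic := by
  have : (pconj P).coeff (pconj P).natDegree = 1 := by
    rw [natDegree_pconj, coeff_pconj, hP.coeff_natDegree, dconj_one]
  exact this

/-- polynomials whose coefficients are central commute with everything -/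
lemma mul_comm_of_central {p : Polynomial DH} (h : ∀ i, ∀ x : DH, p.coeff i * x = x * p.coeff i)
    (q : Polynomial DH) : p * q = q * p := by
  refine Polynomial.ext fun k => ?_
  rw [coeff_mul, coeff_mul, ← Finset.Nat.sum_antidiagonal_swap]
  refine Finset.sum_congr rfl fun x _ => ?_
  simp only [Prod.fst_swap, Prod.snd_swap]
  exact h x.2 (q.coeff x.1)

lemma central_real_poly (r : Polynomial ℝ) (q : Polynomial DH) :
    r.map (algebraMap ℝ DH) * q = q * r.map (algebraMap ℝ DH) := by
  refine mul_comm_of_central (fun i x => ?_) q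
  rw [coeff_map]
  exact (Algebra.commutes _ _)

lemma ofFn_prod_map {m : ℕ} (g : Fin m → Polynomial ℝ) :
    (List.ofFn fun i => (g i).map (algebraMap ℝ DH)).prod
      = ((List.ofFn g).prod).map (algebraMap ℝ DH) := by
  have : (List.ofFn fun i => (g i).map (algebraMap ℝ DH))
      = (List.ofFn g).map (Polynomial.mapRingHom (algebraMap ℝ DH)) := by
    rw [List.map_ofFn]; rfl
  rw [this, ← map_list_prod (Polynomial.mapRingHom (algebraMap ℝ DH))]
  rfl

lemma expand_quad (p q : DH) :
    (X - Polynomial.C p) * (X - Polynomial.C q)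
      = X ^ 2 - Polynomial.C (p + q) * X + Polynomial.C (p * q) := by
  have hX : X * Polynomial.C q = Polynomial.C q * X := Polynomial.X_mul
  rw [Polynomial.C_add, Polynomial.C_mul, mul_sub, sub_mul, sub_mul, hX, add_mul, sq]
  abel

end Aux
namespace Aux
open TrivSqZeroExt

@[simp] lemma primalPart_C (a : DH) :
    primalPart (Polynomial.C a) = Polynomial.C (fst a) :=
  Polynomial.ext fun k => by simp [Polynomial.coeff_C, apply_ite (fst (R := Quaternion ℝ))]

@[simp] lemma primalPart_X : primalPart (X : Polynomial DH) = X :=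
  Polynomial.ext fun k => by simp [Polynomial.coeff_X, apply_ite (fst (R := Quaternion ℝ))]

end Aux

open Aux TrivSqZeroExt

set_option maxHeartbeats 2000000

/-- Given a monic generic motion polynomial `C` of degree `n` and any ordered tuple
`(M₁, …, Mₙ)` of monic irreducible quadratic real polynomials with
`C·C̄ = M₁⋯Mₙ`, there is a factorization `C = (t-h₁)⋯(t-hₙ)` with
`(t-hᵢ)(t-h̄ᵢ) = Mᵢ` for each `i`. -/
theorem generic_motion_polynomial_factorization_with_labels (n : ℕ) (C : Polynomial DH)
    (hmonic : C.Monic) (hdeg : C.natDegree = n)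
    (hmotion : IsMotionPoly C) (hgen : IsGeneric C)
    (M : Fin n → Polynomial ℝ)
    (hMmonic : ∀ i, (M i).Monic) (hMirr : ∀ i, Irreducible (M i))
    (hMdeg : ∀ i, (M i).natDegree = 2)
    (hnorm : C * pconj C = (List.ofFn fun i => (M i).map (algebraMap ℝ DH)).prod) :
    ∃ h : Fin n → DH,
      C = (List.ofFn fun i => X - Polynomial.C (h i)).prod ∧
      ∀ i, (X - Polynomial.C (h i)) * (X - Polynomial.C (dconj (h i))) =
        (M i).map (algebraMap ℝ DH) := by
  induction n generalizing C with
  | zero =>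
    refine ⟨Fin.elim0, ?_, fun i => i.elim0⟩
    have hC1 : C = 1 := hmonic.natDegree_eq_zero.mp hdeg
    simp [hC1]
  | succ n IH =>
    clear hmotion
    set mR : Polynomial ℝ := M (Fin.last n) with hmR
    set mD : Polynomial DH := mR.map (algebraMap ℝ DH) with hmDdef
    have hmRmonic : mR.Monic := hMmonic _
    have hmDmonic : mD.Monic := hmRmonic.map _
    have hmDdeg : mD.natDegree = 2 := by
      rw [hmDdef, hmRmonic.natDegree_map]; exact hMdeg _
    have hmDdeg' : mD.degree = 2 := by
      rw [degree_eq_natDegree hmDmonic.ne_zero, hmDdeg]; rfl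
    have hmDc : ∀ q : Polynomial DH, mD * q = q * mD := central_real_poly mR
    set R : Polynomial DH := C %ₘ mD with hRdef
    set D : Polynomial DH := C /ₘ mD with hDdef
    have hCRD : mD * D + R = C := by
      rw [add_comm]; exact modByMonic_add_div C mD
    have hRdeg : R.degree ≤ 1 := by
      have hlt := degree_modByMonic_lt C hmDmonic
      rw [hmDdeg'] at hlt
      exact Order.le_of_lt_succ hlt
    set a : DH := R.coeff 1 with hadef
    set b : DH := R.coeff 0 with hbdef
    have hRab : R = Polynomial.C a * X + Polynomial.C b := eq_X_add_C_of_degree_le_one hRdeg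
    -- split the norm product
    set Pi : Polynomial DH :=
      (List.ofFn fun i : Fin n => (M i.castSucc).map (algebraMap ℝ DH)).prod with hPidef
    have hsplit : (List.ofFn fun i : Fin (n+1) => (M i).map (algebraMap ℝ DH)).prod
        = Pi * mD := by
      rw [List.ofFn_succ' fun i : Fin (n+1) => (M i).map (algebraMap ℝ DH)]
      rw [List.concat_eq_append, List.prod_append, List.prod_cons, List.prod_nil, mul_one]
    have hN : C * pconj C = Pi * mD := by rw [hnorm, hsplit]
    -- R * pconj R = mD * F
    have hpC : pconj C = pconj R + pconj D * mD := by
      rw [← hCRD, pconj_add, pconj_mul, hmDdef, pconj_map_real, add_comm]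
    set F : Polynomial DH :=
      Pi - (D * pconj R + D * (pconj D * mD) + R * pconj D) with hFdef
    have key : mD * Pi
        = mD * (D * pconj R) + mD * (D * (pconj D * mD)) + (R * pconj R + mD * (R * pconj D)) := by
      calc mD * Pi = Pi * mD := hmDc Pi
        _ = C * pconj C := hN.symm
        _ = (mD * D + R) * (pconj R + pconj D * mD) := by rw [hCRD, ← hpC]
        _ = mD * (D * pconj R) + mD * (D * (pconj D * mD))
            + (R * pconj R + R * (pconj D * mD)) := by noncomm_ring
        _ = _ := by rw [show R * (pconj D * mD) = mD * (R * pconj D) by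
              rw [hmDc (R * pconj D)]; noncomm_ring]
    have hRR : R * pconj R = mD * F := by
      rw [hFdef, mul_sub, mul_add, mul_add, key]
      abel
    -- a is a unit
    have ha : IsUnit a := by
      rw [TrivSqZeroExt.isUnit_iff_isUnit_fst, isUnit_iff_ne_zero]
      intro hfa
      have hPR : primalPart R = Polynomial.C (fst b) := by
        rw [hRab, primalPart_add, primalPart_mul, primalPart_C, primalPart_C, primalPart_X,
          hfa, Polynomial.C_0, zero_mul, zero_add]
      have hPpR : primalPart (pconj R) = Polynomial.C (star (fst b)) := by
        rw [hRab, pconj_add, pconj_mul, pconj_C, pconj_C, pconj_X, primalPart_add,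
          primalPart_mul, primalPart_C, primalPart_C, primalPart_X, fst_dconj, fst_dconj,
          hfa, star_zero, Polynomial.C_0, mul_zero, zero_add]
      have hprim : Polynomial.C (fst b * star (fst b))
          = mR.map (algebraMap ℝ (Quaternion ℝ)) * primalPart F := by
        have := congrArg primalPart hRR
        rw [primalPart_mul, primalPart_mul, hPR, hPpR, hmDdef, primalPart_map_real,
          ← Polynomial.C_mul] at this
        exact this
      rcases eq_or_ne (primalPart F) 0 with h0 | h0
      · rw [h0, mul_zero, Polynomial.C_eq_zero] at hprim
        have hb0 : fst b = 0 := by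
          rcases mul_eq_zero.mp hprim with h | h
          · exact h
          · exact star_eq_zero.mp h
        refine hgen ⟨mR, ?_, primalPart D, ?_⟩
        · rw [hmR, hMdeg]; norm_num
        · have : primalPart C = mR.map (algebraMap ℝ (Quaternion ℝ)) * primalPart D := by
            rw [← hCRD, primalPart_add, primalPart_mul, hPR, hb0, Polynomial.C_0, add_zero,
              hmDdef, primalPart_map_real]
          exact this
      · have hdegs := congrArg natDegree hprim
        rw [natDegree_C, (hmRmonic.map (algebraMap ℝ (Quaternion ℝ))).natDegree_mul' h0,
          hmRmonic.natDegree_map, hMdeg] at hdegs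
        omega
    obtain ⟨u, hu⟩ := ha
    set h : DH := -(↑u⁻¹ * b) with hhdef
    have hah : a * h = -b := by
      rw [hhdef, ← hu, mul_neg, ← mul_assoc, Units.mul_inv, one_mul]
    have hfac : R = Polynomial.C a * (X - Polynomial.C h) := by
      rw [mul_sub, ← Polynomial.C_mul, hah, Polynomial.C_neg, sub_neg_eq_add, hRab]
    -- the quadratic factor
    set G : Polynomial DH := (X - Polynomial.C h) * (X - Polynomial.C (dconj h)) with hGdef
    have hpR : pconj R = (X - Polynomial.C (dconj h)) * Polynomial.C (dconj a) := by
      rw [hfac, pconj_mul, pconj_C, pconj_X_sub_C]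
    have hGf : Polynomial.C a * G * Polynomial.C (dconj a) = mD * F := by
      calc Polynomial.C a * G * Polynomial.C (dconj a)
          = (Polynomial.C a * (X - Polynomial.C h))
            * ((X - Polynomial.C (dconj h)) * Polynomial.C (dconj a)) := by
            rw [hGdef]; noncomm_ring
        _ = R * pconj R := by rw [← hfac, ← hpR]
        _ = mD * F := hRR
    have hGmonic : G.Monic := (monic_X_sub_C h).mul (monic_X_sub_C (dconj h))
    have hGdeg : G.natDegree = 2 := by
      rw [hGdef, (monic_X_sub_C h).natDegree_mul (monic_X_sub_C (dconj h)),
        natDegree_X_sub_C, natDegree_X_sub_C]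
    -- F is a constant
    have hFdeg : F.degree ≤ 0 := by
      by_contra hF
      have hFne : F ≠ 0 := by
        intro hF0
        exact hF (by rw [hF0, degree_zero]; exact bot_le)
      have h2 : (mD * F).natDegree = 2 + F.natDegree := by
        rw [hmDmonic.natDegree_mul' hFne, hmDdeg]
      have h3 : (mD * F).natDegree ≤ 2 := by
        rw [← hGf]
        calc (Polynomial.C a * G * Polynomial.C (dconj a)).natDegree
            ≤ (Polynomial.C a * G).natDegree + (Polynomial.C (dconj a)).natDegree :=
              natDegree_mul_le
          _ ≤ (Polynomial.C a).natDegree + G.natDegree + (Polynomial.C (dconj a)).natDegree := by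
              have := natDegree_mul_le (p := Polynomial.C a) (q := G); omega
          _ ≤ 2 := by simp [natDegree_C, hGdeg]
      have h4 : 0 < F.natDegree := by
        by_contra h5
        push_neg at h5
        exact hF (natDegree_eq_zero_iff_degree_le_zero.mp (by omega))
      omega
    have hFC : F = Polynomial.C (F.coeff 0) := eq_C_of_degree_le_zero hFdeg
    set f : DH := F.coeff 0 with hfdef
    -- identify f = a * dconj a by looking at the degree-2 coefficient
    have hfval : f = a * dconj a := by
      have hG2 : G.coeff 2 = 1 := by rw [← hGdeg]; exact hGmonic.coeff_natDegree
      have hm2 : mD.coeff 2 = 1 := by rw [← hmDdeg]; exact hmDmonic.coeff_natDegree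
      have := congrArg (fun p => Polynomial.coeff p 2) hGf
      rw [hFC] at this
      rw [coeff_mul_C, coeff_C_mul, hG2, coeff_mul_C, hm2, mul_one, one_mul] at this
      exact this.symm
    -- G = mD
    have hG : G = mD := by
      obtain ⟨v, hv⟩ := isUnit_dconj (⟨u, hu⟩ : IsUnit a)
      have h1 : G * Polynomial.C (dconj a) = mD * Polynomial.C (dconj a) := by
        have e1 : Polynomial.C (↑u⁻¹ : DH) * (Polynomial.C a * G * Polynomial.C (dconj a))
            = G * Polynomial.C (dconj a) := by
          rw [← mul_assoc, ← mul_assoc, ← Polynomial.C_mul, ← hu, Units.inv_mul,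
            Polynomial.C_1, one_mul]
        have e2 : Polynomial.C (↑u⁻¹ : DH) * (mD * F)
            = mD * Polynomial.C (dconj a) := by
          rw [hFC, hfval, ← mul_assoc, ← hmDc (Polynomial.C (↑u⁻¹ : DH)), mul_assoc,
            ← Polynomial.C_mul, ← hu, ← mul_assoc ((↑u⁻¹ : DH)), Units.inv_mul, one_mul]
        rw [← e1, hGf, e2]
      exact (Polynomial.isUnit_C.mpr (isUnit_dconj ⟨u, hu⟩)).mul_right_cancel h1
    -- h + dconj h is a real scalar
    have hs : h + dconj h = algebraMap ℝ DH (-(mR.coeff 1)) := by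
      have := congrArg (fun p => Polynomial.coeff p 1) hG
      rw [hGdef, expand_quad] at this
      have hc1 : (X ^ 2 - Polynomial.C (h + dconj h) * X
          + Polynomial.C (h * dconj h)).coeff 1 = -(h + dconj h) := by
        rw [coeff_add, coeff_sub, coeff_X_pow, coeff_C_mul, coeff_X_one, coeff_C]
        norm_num
      rw [hc1] at this
      have hcm : mD.coeff 1 = algebraMap ℝ DH (mR.coeff 1) := by
        rw [hmDdef, coeff_map]
      rw [hcm] at this
      rw [map_neg, ← this, neg_neg]
    have hcomm : h * dconj h = dconj h * h := by
      have hd : dconj h = algebraMap ℝ DH (-(mR.coeff 1)) - h := by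
        rw [← hs, add_sub_cancel_left]
      rw [hd, mul_sub, sub_mul, ← Algebra.commutes (-(mR.coeff 1)) h]
    have hG' : (X - Polynomial.C (dconj h)) * (X - Polynomial.C h) = mD := by
      rw [expand_quad, ← hcomm, add_comm (dconj h) h, ← expand_quad, ← hGdef, hG]
    -- the left cofactor
    set C' : Polynomial DH := D * (X - Polynomial.C (dconj h)) + Polynomial.C a with hC'def
    have hCfac : C = C' * (X - Polynomial.C h) := by
      calc C = mD * D + R := hCRD.symm
        _ = D * mD + R := by rw [hmDc D]
        _ = D * ((X - Polynomial.C (dconj h)) * (X - Polynomial.C h))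
            + Polynomial.C a * (X - Polynomial.C h) := by rw [hG', ← hfac]
        _ = C' * (X - Polynomial.C h) := by rw [hC'def]; noncomm_ring
    have hC'monic : C'.Monic := by
      have hm := hmonic
      rw [Monic, hCfac, leadingCoeff_mul_monic (monic_X_sub_C h)] at hm
      exact hm
    have hC'deg : C'.natDegree = n := by
      have : C.natDegree = C'.natDegree + 1 := by
        rw [hCfac, hC'monic.natDegree_mul (monic_X_sub_C h), natDegree_X_sub_C]
      omega
    have hnormC' : C' * pconj C' = Pi := by
      have e : C * pconj C = C' * pconj C' * mD := by
        calc C * pconj C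
            = (C' * (X - Polynomial.C h)) * ((X - Polynomial.C (dconj h)) * pconj C') := by
              rw [hCfac, pconj_mul, pconj_X_sub_C]
          _ = C' * G * pconj C' := by rw [hGdef]; noncomm_ring
          _ = C' * mD * pconj C' := by rw [hG]
          _ = C' * pconj C' * mD := by
              rw [mul_assoc, hmDc (pconj C'), ← mul_assoc]
      refine hmDmonic.isRegular.right ?_
      show C' * pconj C' * mD = Pi * mD
      rw [← e, hN]
    have hmotion' : IsMotionPoly C' := by
      refine ⟨by rw [hC'monic.leadingCoeff]; exact isUnit_one, ?_⟩
      exact ⟨(List.ofFn fun i : Fin n => M i.castSucc).prod, by rw [hnormC', hPidef, ofFn_prod_map]⟩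
    have hgen' : IsGeneric C' := by
      rintro ⟨r, hr0, s, hsdvd⟩
      refine hgen ⟨r, hr0, s * (X - Polynomial.C (fst h)), ?_⟩
      rw [hCfac, primalPart_mul, primalPart_X_sub_C, hsdvd, mul_assoc]
    obtain ⟨h', hfac', hquad'⟩ := IH C' hC'monic hC'deg hmotion' hgen'
      (fun i => M i.castSucc) (fun i => hMmonic _) (fun i => hMirr _) (fun i => hMdeg _)
      hnormC'
    refine ⟨Fin.snoc h' h, ?_, ?_⟩
    · have e : (List.ofFn fun i : Fin (n+1) => X - Polynomial.C (Fin.snoc h' h i)).prod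
          = (List.ofFn fun i : Fin n => X - Polynomial.C (h' i)).prod
            * (X - Polynomial.C h) := by
        rw [List.ofFn_succ']
        rw [List.concat_eq_append, List.prod_append, List.prod_cons, List.prod_nil, mul_one]
        simp only [Fin.snoc_castSucc, Fin.snoc_last]
      rw [e, ← hfac']
      exact hCfac
    · intro i
      refine Fin.lastCases ?_ ?_ i
      · simp only [Fin.snoc_last]
        rw [← hGdef, hG, hmDdef, hmR]
      · intro j
        simp only [Fin.snoc_castSucc]
        exact hquad' j
end
end

section
/- Let h₁, …, hₙ ∈ DH be such that for each i the polynomial Nᵢ := (t − hᵢ)·(t − h̄ᵢ) has only real scalar coefficients. Then the norm polynomial of the product C = (t − h₁)·(t − h₂)⋯(t − hₙ) satisfies C·C̄ = N₁·N₂⋯Nₙ. -/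
open Polynomial
noncomputable section

@[simp] lemma dconj_fst (a : DH) :
    TrivSqZeroExt.fst (dconj a) = star (TrivSqZeroExt.fst a) := by
  simp [dconj]

@[simp] lemma dconj_snd (a : DH) :
    TrivSqZeroExt.snd (dconj a) = star (TrivSqZeroExt.snd a) := by
  simp [dconj]

@[simp] lemma dconj_zero : dconj 0 = 0 := by
  refine TrivSqZeroExt.ext ?_ ?_ <;> simp

@[simp] lemma dconj_one : dconj 1 = 1 := by
  refine TrivSqZeroExt.ext ?_ ?_ <;> simp

@[simp] lemma dconj_neg (a : DH) : dconj (-a) = -dconj a := by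
  refine TrivSqZeroExt.ext ?_ ?_ <;> simp

@[simp] lemma dconj_add (a b : DH) : dconj (a + b) = dconj a + dconj b := by
  refine TrivSqZeroExt.ext ?_ ?_ <;> simp

lemma dconj_mul (a b : DH) : dconj (a * b) = dconj b * dconj a := by
  refine TrivSqZeroExt.ext ?_ ?_
  · simp
  · simp [TrivSqZeroExt.snd_mul, smul_eq_mul, MulOpposite.smul_eq_mul_unop, add_comm]

lemma dconj_sum {ι : Type*} (s : Finset ι) (f : ι → DH) :
    dconj (∑ x ∈ s, f x) = ∑ x ∈ s, dconj (f x) :=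
  map_sum (AddMonoidHom.mk' dconj dconj_add) f s

@[simp] lemma pconj_coeff (P : Polynomial DH) (m : ℕ) :
    (pconj P).coeff m = dconj (P.coeff m) := by
  rw [pconj, Polynomial.sum_def, Polynomial.finset_sum_coeff]
  simp only [Polynomial.coeff_monomial]
  rw [Finset.sum_ite_eq' P.support m fun n => dconj (P.coeff n)]
  by_cases hm : m ∈ P.support
  · simp [hm]
  · simp [hm, Polynomial.notMem_support_iff.mp hm]

lemma pconj_mul (P Q : Polynomial DH) : pconj (P * Q) = pconj Q * pconj P := by
  refine Polynomial.ext fun n => ?_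
  rw [pconj_coeff, Polynomial.coeff_mul, Polynomial.coeff_mul, dconj_sum]
  conv_rhs => rw [← Finset.Nat.sum_antidiagonal_swap]
  refine Finset.sum_congr rfl fun x hx => ?_
  simp [dconj_mul]

lemma pconj_one : pconj 1 = 1 := by
  refine Polynomial.ext fun n => ?_
  rw [pconj_coeff]
  by_cases hn : n = 0 <;> simp [hn, Polynomial.coeff_one]

lemma pconj_linear (a : DH) : pconj (X - Polynomial.C a) = X - Polynomial.C (dconj a) := by
  refine Polynomial.ext fun n => ?_
  rw [pconj_coeff]
  rcases n with _ | _ | n <;>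
    simp [Polynomial.coeff_X, Polynomial.coeff_C, sub_eq_add_neg]

lemma real_comm {P Q : Polynomial DH} (hP : IsRealPoly P) : P * Q = Q * P := by
  obtain ⟨r, rfl⟩ := hP
  refine Polynomial.ext fun n => ?_
  rw [Polynomial.coeff_mul, Polynomial.coeff_mul]
  conv_rhs => rw [← Finset.Nat.sum_antidiagonal_swap]
  refine Finset.sum_congr rfl fun x hx => ?_
  simp only [Prod.fst_swap, Prod.snd_swap, Polynomial.coeff_map]
  exact Algebra.commutes (r.coeff x.1) (Q.coeff x.2)

lemma isReal_prod (L : List DH)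
    (hL : ∀ a ∈ L, IsRealPoly ((X - Polynomial.C a) * (X - Polynomial.C (dconj a)))) :
    IsRealPoly ((L.map fun a => (X - Polynomial.C a) * (X - Polynomial.C (dconj a))).prod) := by
  induction L with
  | nil => exact ⟨1, by simp⟩
  | cons a L ih =>
    obtain ⟨r, hr⟩ := hL a List.mem_cons_self
    obtain ⟨s, hs⟩ := ih fun b hb => hL b (List.mem_cons_of_mem a hb)
    exact ⟨r * s, by simp [hr, hs, Polynomial.map_mul]⟩

lemma key (L : List DH)
    (hL : ∀ a ∈ L, IsRealPoly ((X - Polynomial.C a) * (X - Polynomial.C (dconj a)))) :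
    (L.map fun a => X - Polynomial.C a).prod *
        pconj ((L.map fun a => X - Polynomial.C a).prod) =
      (L.map fun a => (X - Polynomial.C a) * (X - Polynomial.C (dconj a))).prod := by
  induction L with
  | nil => simp [pconj_one]
  | cons a L ih =>
    have hrest := isReal_prod L fun b hb => hL b (List.mem_cons_of_mem a hb)
    have ihL := ih fun b hb => hL b (List.mem_cons_of_mem a hb)
    simp only [List.map_cons, List.prod_cons]
    rw [pconj_mul, pconj_linear]
    calc (X - Polynomial.C a) * (L.map fun a => X - Polynomial.C a).prod *
          (pconj ((L.map fun a => X - Polynomial.C a).prod) * (X - Polynomial.C (dconj a)))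
        = (X - Polynomial.C a) *
            ((L.map fun a => X - Polynomial.C a).prod *
              pconj ((L.map fun a => X - Polynomial.C a).prod)) *
            (X - Polynomial.C (dconj a)) := by simp only [mul_assoc]
      _ = (X - Polynomial.C a) *
            ((L.map fun a => (X - Polynomial.C a) * (X - Polynomial.C (dconj a))).prod *
              (X - Polynomial.C (dconj a))) := by rw [ihL, mul_assoc]
      _ = (X - Polynomial.C a) * ((X - Polynomial.C (dconj a)) *
            (L.map fun a => (X - Polynomial.C a) * (X - Polynomial.C (dconj a))).prod) := by
              rw [real_comm hrest]
      _ = (X - Polynomial.C a) * (X - Polynomial.C (dconj a)) *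
            (L.map fun a => (X - Polynomial.C a) * (X - Polynomial.C (dconj a))).prod := by
              rw [mul_assoc]

/-- If each linear factor `t - hᵢ` has real norm polynomial
`Nᵢ = (t-hᵢ)(t-h̄ᵢ)`, then the norm polynomial of the product
`C = (t-h₁)⋯(t-hₙ)` is `C·C̄ = N₁⋯Nₙ`. -/
theorem norm_of_product_of_linear_motion_polynomials (n : ℕ) (h : Fin n → DH)
    (hreal : ∀ i, IsRealPoly ((X - Polynomial.C (h i)) * (X - Polynomial.C (dconj (h i))))) :
    ((List.ofFn fun i => X - Polynomial.C (h i)).prod) *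
        pconj ((List.ofFn fun i => X - Polynomial.C (h i)).prod) =
      (List.ofFn fun i =>
        (X - Polynomial.C (h i)) * (X - Polynomial.C (dconj (h i)))).prod := by
  have := key ((List.finRange n).map h) ?_
  · simpa [List.ofFn_eq_map, List.map_map, Function.comp_def] using this
  · intro a ha
    obtain ⟨i, _, rfl⟩ := List.mem_map.mp ha
    exact hreal i
end
end

section
/- Let a ∈ ℝ with a > 0, and for arbitrary λ, μ ∈ ℝ set h₁ = k + ε(λ·i + (μ − a)·j) and h₂ = −k − ε(λ·i + μ·j). Then (t − h₁)·(t − h₂) = t² + 1 + ε(a·j·t + a·i); that is, the circular translation t² + 1 + ε(a·j·t + a·i) admits infinitely many factorizations into two linear factors. -/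
open Polynomial
noncomputable section

lemma expand_aux (h₁ h₂ : DH) : ((X : Polynomial DH) - C h₁) * (X - C h₂)
    = X^2 - C (h₁ + h₂) * X + C (h₁ * h₂) := by
  rw [sub_mul, mul_sub, mul_sub, ← sq, Polynomial.C_add, Polynomial.C_mul,
    (Polynomial.commute_X (C h₂)).eq]
  noncomm_ring

/-- For every `λ, μ ∈ ℝ`, the dual quaternions `h₁ = k + ε(λ·i + (μ-a)·j)` and
`h₂ = -k - ε(λ·i + μ·j)` give a factorization `(t-h₁)(t-h₂)` of the circular
translation `t² + 1 + ε(a·j·t + a·i)`; in particular there are infinitely many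
such factorizations. -/
theorem circular_translation_factorizations (a : ℝ) (ha : a > 0) (lam mu : ℝ) :
    ((X : Polynomial DH) -
          Polynomial.C (TrivSqZeroExt.inl qk + TrivSqZeroExt.inr (lam • qi + (mu - a) • qj))) *
        (X -
          Polynomial.C (-(TrivSqZeroExt.inl qk) - TrivSqZeroExt.inr (lam • qi + mu • qj))) =
      (X : Polynomial DH) ^ 2 + 1 +
        Polynomial.C (TrivSqZeroExt.inr (a • qj)) * X +
        Polynomial.C (TrivSqZeroExt.inr (a • qi)) := by
  set h₁ : DH := TrivSqZeroExt.inl qk + TrivSqZeroExt.inr (lam • qi + (mu - a) • qj) with hh1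
  set h₂ : DH := -(TrivSqZeroExt.inl qk) - TrivSqZeroExt.inr (lam • qi + mu • qj) with hh2
  have hsum : h₁ + h₂ = -(TrivSqZeroExt.inr (a • qj) : DH) := by
    ext <;> simp [hh1, hh2, Quaternion.ext_iff] <;> simp [qi, qj, qk] <;> ring
  have hprod : h₁ * h₂ = 1 + TrivSqZeroExt.inr (a • qi) := by
    ext <;> simp [hh1, hh2, Quaternion.ext_iff, TrivSqZeroExt.fst_mul,
      TrivSqZeroExt.snd_mul] <;> simp [qi, qj, qk, Quaternion.re_one, Quaternion.imI_one,
      Quaternion.imJ_one, Quaternion.imK_one] <;> ring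
  rw [expand_aux, hsum, hprod, Polynomial.C_add, Polynomial.C_neg, map_one]
  have key : ∀ p q r : Polynomial DH, p - -q * X + (1 + r) = p + 1 + q * X + r := by
    intro p q r; rw [show -q * X = -(q * X) from neg_mul q X]; abel
  exact key _ _ _
end
end

section
/- Let a ∈ ℝ with a > 0 and suppose h₁, h₂ ∈ DH satisfy (t − h₁)·(t − h₂) = t² + 1 + ε(a·j·t + a·i). Then there exist λ, μ ∈ ℝ such that h₁ = k + ε(λ·i + (μ − a)·j) and h₂ = −k − ε(λ·i + μ·j); that is, every factorization of the circular translation into two linear factors is of this form. -/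
open Polynomial
noncomputable section

/-- Every factorization `(t-h₁)(t-h₂)` of the circular translation
`t² + 1 + ε(a·j·t + a·i)` has the form `h₁ = k + ε(λ·i + (μ-a)·j)`,
`h₂ = -k - ε(λ·i + μ·j)` for some `λ, μ ∈ ℝ`. -/
theorem circular_translation_factorizations_classified (a : ℝ) (ha : a > 0) (h₁ h₂ : DH)
    (hfac : ((X : Polynomial DH) - Polynomial.C h₁) * (X - Polynomial.C h₂) =
      (X : Polynomial DH) ^ 2 + 1 +
        Polynomial.C (TrivSqZeroExt.inr (a • qj)) * X +
        Polynomial.C (TrivSqZeroExt.inr (a • qi))) :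
    ∃ lam mu : ℝ,
      h₁ = TrivSqZeroExt.inl qk + TrivSqZeroExt.inr (lam • qi + (mu - a) • qj) ∧
      h₂ = -(TrivSqZeroExt.inl qk) - TrivSqZeroExt.inr (lam • qi + mu • qj) := by
  -- Step 1: coefficient equations
  have key : ((X : Polynomial DH) - Polynomial.C h₁) * (X - Polynomial.C h₂) =
      X^2 - C h₁ * X - X * C h₂ + C h₁ * C h₂ := by
    rw [sub_mul, mul_sub, mul_sub, pow_two]; abel
  rw [key, Polynomial.X_mul_C] at hfac
  have e1 := congrArg (fun P => Polynomial.coeff P 1) hfac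
  have e0 := congrArg (fun P => Polynomial.coeff P 0) hfac
  simp only [Polynomial.coeff_add, Polynomial.coeff_sub, Polynomial.coeff_C_mul,
    Polynomial.coeff_X_pow, Polynomial.coeff_X_one, Polynomial.coeff_X_zero,
    Polynomial.coeff_one, Polynomial.coeff_C, mul_one, mul_zero,
    show (1:ℕ) ≠ 2 by norm_num, show (1:ℕ) ≠ 0 by norm_num,
    show (0:ℕ) ≠ 2 by norm_num, if_neg, if_pos, if_true, if_false, ne_eq,
    not_false_eq_true, zero_sub, sub_zero, zero_add, add_zero, neg_add_rev] at e1 e0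
  -- e1 : -h₁ - h₂ = inr (a•qj) ; e0 : h₁ * h₂ = 1 + inr (a•qi)
  have E1 : h₁ + h₂ = -(TrivSqZeroExt.inr (a • qj) : DH) := by
    have h : -(h₁ + h₂) = (TrivSqZeroExt.inr (a • qj) : DH) := by
      rw [neg_add, ← sub_eq_add_neg]; exact e1
    exact neg_eq_iff_eq_neg.mp h
  have E0 : h₁ * h₂ = 1 + (TrivSqZeroExt.inr (a • qi) : DH) := e0
  clear e1 e0 hfac key
  -- Step 2: primal/dual parts
  have f1 := congrArg TrivSqZeroExt.fst E1
  have s1 := congrArg TrivSqZeroExt.snd E1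
  have f0 := congrArg TrivSqZeroExt.fst E0
  have s0 := congrArg TrivSqZeroExt.snd E0
  simp only [TrivSqZeroExt.fst_add, TrivSqZeroExt.snd_add, TrivSqZeroExt.fst_neg,
    TrivSqZeroExt.snd_neg, TrivSqZeroExt.fst_inr, TrivSqZeroExt.snd_inr,
    TrivSqZeroExt.fst_one, TrivSqZeroExt.snd_one, TrivSqZeroExt.fst_mul,
    TrivSqZeroExt.snd_mul, smul_eq_mul, MulOpposite.smul_eq_mul_unop,
    MulOpposite.unop_op, add_zero, neg_zero] at f1 s1 f0 s0
  set p := TrivSqZeroExt.fst h₁ with hpdef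
  set q := TrivSqZeroExt.snd h₁ with hqdef
  have hp2 : TrivSqZeroExt.fst h₂ = -p := (add_eq_zero_iff_neg_eq.mp f1).symm
  have hq2 : TrivSqZeroExt.snd h₂ = -(a • qj) - q := eq_sub_of_add_eq' s1
  clear_value p q
  clear E1 E0 f1 s1
  rw [zero_add] at s0
  rw [hp2] at f0 s0
  rw [hq2] at s0
  -- Step 3: quaternion components
  simp only [Quaternion.ext_iff] at f0 s0
  simp only [Quaternion.re_mul, Quaternion.imI_mul, Quaternion.imJ_mul, Quaternion.imK_mul,
    Quaternion.re_neg, Quaternion.imI_neg, Quaternion.imJ_neg, Quaternion.imK_neg,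
    Quaternion.re_add, Quaternion.imI_add, Quaternion.imJ_add, Quaternion.imK_add,
    Quaternion.re_sub, Quaternion.imI_sub, Quaternion.imJ_sub, Quaternion.imK_sub,
    Quaternion.re_smul, Quaternion.imI_smul, Quaternion.imJ_smul, Quaternion.imK_smul,
    Quaternion.re_one, Quaternion.imI_one, Quaternion.imJ_one, Quaternion.imK_one,
    smul_eq_mul] at f0 s0
  simp only [qi, qj] at f0 s0
  norm_num at f0 s0
  ring_nf at f0 s0
  obtain ⟨A1, A2, A3, A4⟩ := f0
  obtain ⟨D1, D2, D3, D4⟩ := s0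
  -- A1 : -p.re^2 + p.imI^2 + p.imJ^2 + p.imK^2 = 1
  -- A2 : -(p.re * p.imI * 2) = 0 ; A3 : imJ ; A4 : imK
  -- D1 : -(p.re*q.re*2) + p.imI*q.imI*2 + p.imJ*a + p.imJ*q.imJ*2 + p.imK*q.imK*2 = 0
  -- D2 : -(p.re*q.imI*2) - p.imI*q.re*2 + p.imK*a = a
  -- D3 : -(p.re*a) + (-(p.re*q.imJ*2) - p.imJ*q.re*2) = 0
  -- D4 : -(p.re*q.imK*2) + (-(p.imI*a) - p.imK*q.re*2) = 0
  have hw : p.re = 0 := by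
    by_contra hw0
    have hx : p.imI = 0 := by
      have h2 : p.re * p.imI = 0 := by linarith
      exact (mul_eq_zero.mp h2).resolve_left hw0
    have hy : p.imJ = 0 := by
      have h2 : p.re * p.imJ = 0 := by linarith
      exact (mul_eq_zero.mp h2).resolve_left hw0
    have hz : p.imK = 0 := by
      have h2 : p.re * p.imK = 0 := by linarith
      exact (mul_eq_zero.mp h2).resolve_left hw0
    rw [hx, hy, hz] at A1
    nlinarith [sq_nonneg p.re]
  rw [hw] at A1 D1 D2 D3 D4
  ring_nf at A1 D1 D2 D3 D4
  -- now: A1 : p.imI^2 + p.imJ^2 + p.imK^2 = 1 (up to normal form)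
  have ht : q.re = 0 := by
    by_contra ht0
    have hy : p.imJ = 0 := by
      have h2 : p.imJ * q.re = 0 := by linarith
      exact (mul_eq_zero.mp h2).resolve_right ht0
    have G1 : p.imK * (a^2 + 4*q.re^2) = a^2 := by
      linear_combination a*D2 - 2*q.re*D4
    have G2 : p.imK^2 * (a^2 + 4*q.re^2) = a^2 := by
      linear_combination (a*p.imI - 2*p.imK*q.re)*D4 + a^2*A1 - a^2*p.imJ*hy
    have hD : a^2 + 4*q.re^2 > 0 := by positivity
    have hzz : p.imK * (p.imK - 1) = 0 := by
      have h0 : (p.imK^2 - p.imK) * (a^2 + 4*q.re^2) = 0 := by linarith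
      rcases mul_eq_zero.mp h0 with h | h
      · linear_combination h
      · linarith [hD]
    have ha2 : 0 < a^2 := pow_pos ha 2
    have hzpos : p.imK > 0 := by
      by_contra hcon
      push_neg at hcon
      nlinarith [mul_nonneg (neg_nonneg.mpr hcon) hD.le]
    have hz1 : p.imK = 1 := by
      rcases mul_eq_zero.mp hzz with h | h
      · linarith
      · linarith
    rw [hz1, one_mul] at G1
    have hq2pos : 0 < q.re^2 := lt_of_le_of_ne (sq_nonneg _) (Ne.symm (pow_ne_zero 2 ht0))
    linarith
  rw [ht] at D2 D3 D4
  ring_nf at D2 D3 D4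
  have hz : p.imK = 1 := by
    have : a * p.imK = a * 1 := by linarith [D2]
    exact mul_left_cancel₀ (ne_of_gt ha) this
  have hx : p.imI = 0 := by
    have h2 : a * p.imI = 0 := by linarith [D4]
    exact (mul_eq_zero.mp h2).resolve_left (ne_of_gt ha)
  have hy : p.imJ = 0 := by
    rw [hx, hz] at A1
    norm_num at A1
    exact A1
  have hs : q.imK = 0 := by
    rw [hx, hy, hz] at D1
    linarith [D1]
  refine ⟨q.imI, q.imJ + a, ?_, ?_⟩
  · apply TrivSqZeroExt.ext
    · simp only [TrivSqZeroExt.fst_add, TrivSqZeroExt.fst_inl, TrivSqZeroExt.fst_inr, add_zero,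
        ← hpdef]
      simp only [Quaternion.ext_iff, Quaternion.re_smul]
      simp only [qk]
      refine ⟨hw, hx, hy, hz⟩
    · simp only [TrivSqZeroExt.snd_add, TrivSqZeroExt.snd_inl, TrivSqZeroExt.snd_inr, zero_add,
        ← hqdef]
      simp only [Quaternion.ext_iff, Quaternion.re_add, Quaternion.imI_add,
        Quaternion.imJ_add, Quaternion.imK_add, Quaternion.re_smul, Quaternion.imI_smul,
        Quaternion.imJ_smul, Quaternion.imK_smul, smul_eq_mul]
      simp only [qi, qj]
      norm_num
      exact ⟨ht, hs⟩
  · apply TrivSqZeroExt.ext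
    · rw [hp2]
      simp only [TrivSqZeroExt.fst_sub, TrivSqZeroExt.fst_neg, TrivSqZeroExt.fst_inl,
        TrivSqZeroExt.fst_inr, sub_zero]
      simp only [Quaternion.ext_iff, Quaternion.re_neg, Quaternion.imI_neg,
        Quaternion.imJ_neg, Quaternion.imK_neg]
      simp only [qk]
      norm_num
      refine ⟨hw, hx, hy, hz⟩
    · rw [hq2]
      simp only [TrivSqZeroExt.snd_sub, TrivSqZeroExt.snd_neg, TrivSqZeroExt.snd_inl,
        TrivSqZeroExt.snd_inr, zero_sub]
      simp only [Quaternion.ext_iff, Quaternion.re_add, Quaternion.imI_add,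
        Quaternion.imJ_add, Quaternion.imK_add, Quaternion.re_sub, Quaternion.imI_sub,
        Quaternion.imJ_sub, Quaternion.imK_sub, Quaternion.re_neg, Quaternion.imI_neg,
        Quaternion.imJ_neg, Quaternion.imK_neg, Quaternion.re_smul, Quaternion.imI_smul,
        Quaternion.imJ_smul, Quaternion.imK_smul, smul_eq_mul]
      simp only [qi, qj, Quaternion.re_zero, Quaternion.imI_zero, Quaternion.imJ_zero,
        Quaternion.imK_zero]
      norm_num
      exact ⟨ht, by ring, hs⟩
end
end

section
/- Let a, b ∈ ℝ with a > b > 0 and let C = t² + 1 + ε(b·j·t + a·i) ∈ DH[t]. Set h₁ = k − ((a−b)/(a+b))·ε·i, h₂ = −k + ε·(2(a−b)·i − (a+b)²·j)/(2(a+b)), h₃ = −k − ε·(i − ((a−b)/2)·j), and h₄ = k + ε·i. Then (t² + 1)·C = (t − h₁)·(t − h₂)·(t − h₃)·(t − h₄). -/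
open Polynomial
noncomputable section

variable {R : Type*} [Ring R]

lemma XCp (a : R) (p : R[X]) : (X : R[X]) * (C a * p) = C a * (X * p) := by
  rw [← mul_assoc, X_mul_C, mul_assoc]

lemma lin2 (p q : R) : ((X : R[X]) - C p) * (X - C q) =
    X^2 - C (p+q) * X + C (p*q) := by
  simp only [sub_mul, mul_sub, X_mul_C, map_add, map_mul, sq]
  noncomm_ring

lemma lhs_form (u v : R) : (X : R[X])^2 + 1 + C u * X + C v =
    X^2 - C (-u) * X + C (1 + v) := by
  simp only [map_neg, map_add, map_one]
  noncomm_ring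

lemma quad (s m s' m' : R) :
    ((X : R[X])^2 - C s * X + C m) * (X^2 - C s' * X + C m') =
    X^4 - C (s + s') * X^3 + C (s*s' + m + m') * X^2 - C (s*m' + m*s') * X + C (m*m') := by
  simp only [sub_mul, mul_sub, add_mul, mul_add, mul_assoc, pow_succ, pow_zero, one_mul,
    X_mul_C, XCp, map_mul, map_add]
  noncomm_ring

@[simp] lemma qi_re : qi.re = 0 := rfl
@[simp] lemma qi_imI : qi.imI = 1 := rfl
@[simp] lemma qi_imJ : qi.imJ = 0 := rfl
@[simp] lemma qi_imK : qi.imK = 0 := rfl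
@[simp] lemma qj_re : qj.re = 0 := rfl
@[simp] lemma qj_imI : qj.imI = 0 := rfl
@[simp] lemma qj_imJ : qj.imJ = 1 := rfl
@[simp] lemma qj_imK : qj.imK = 0 := rfl
@[simp] lemma qk_re : qk.re = 0 := rfl
@[simp] lemma qk_imI : qk.imI = 0 := rfl
@[simp] lemma qk_imJ : qk.imJ = 0 := rfl
@[simp] lemma qk_imK : qk.imK = 1 := rfl


set_option maxHeartbeats 2000000 in
/-- The multiplication trick: for the elliptic translation
`C = t² + 1 + ε(b·j·t + a·i)` with `a > b > 0`, the product `(t² + 1)·C`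
factors into the four linear factors given by
`h₁ = k - ((a-b)/(a+b))·ε·i`, `h₂ = -k + ε(2(a-b)·i - (a+b)²·j)/(2(a+b))`,
`h₃ = -k - ε(i - ((a-b)/2)·j)`, `h₄ = k + ε·i`. -/
theorem multiplication_trick_elliptic_translation (a b : ℝ) (hab : a > b) (hb : b > 0) :
    ((X : Polynomial DH) ^ 2 + 1) *
        ((X : Polynomial DH) ^ 2 + 1 +
          Polynomial.C (TrivSqZeroExt.inr (b • qj)) * X +
          Polynomial.C (TrivSqZeroExt.inr (a • qi))) =
      (X - Polynomial.C (TrivSqZeroExt.inl qk -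
          TrivSqZeroExt.inr (((a - b) / (a + b)) • qi))) *
      (X - Polynomial.C (-(TrivSqZeroExt.inl qk) +
          TrivSqZeroExt.inr ((2 * (a + b))⁻¹ •
            ((2 * (a - b)) • qi - ((a + b) ^ 2) • qj)))) *
      (X - Polynomial.C (-(TrivSqZeroExt.inl qk) -
          TrivSqZeroExt.inr (qi - ((a - b) / 2) • qj))) *
      (X - Polynomial.C (TrivSqZeroExt.inl qk + TrivSqZeroExt.inr qi)) := by
  have e1 : ((X : Polynomial DH) ^ 2 + 1) = X^2 - C 0 * X + C 1 := by simp

  rw [lhs_form, e1, quad, mul_assoc, lin2, lin2, quad]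
  have hne : a + b ≠ 0 := by nlinarith
  have c3 : (TrivSqZeroExt.inl qk - TrivSqZeroExt.inr (((a - b) / (a + b)) • qi) +
        (-TrivSqZeroExt.inl qk +
          TrivSqZeroExt.inr ((2 * (a + b))⁻¹ • ((2 * (a - b)) • qi - (a + b) ^ 2 • qj))) +
      (-TrivSqZeroExt.inl qk - TrivSqZeroExt.inr (qi - ((a - b) / 2) • qj) +
        (TrivSqZeroExt.inl qk + TrivSqZeroExt.inr qi)) : DH) =
      0 + -TrivSqZeroExt.inr (b • qj) := by
    ext <;> simp [Quaternion.ext_iff] <;> field_simp <;> ring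
  have c2 : ((TrivSqZeroExt.inl qk - TrivSqZeroExt.inr (((a - b) / (a + b)) • qi) +
          (-TrivSqZeroExt.inl qk +
            TrivSqZeroExt.inr ((2 * (a + b))⁻¹ • ((2 * (a - b)) • qi - (a + b) ^ 2 • qj)))) *
        (-TrivSqZeroExt.inl qk - TrivSqZeroExt.inr (qi - ((a - b) / 2) • qj) +
          (TrivSqZeroExt.inl qk + TrivSqZeroExt.inr qi)) +
      (TrivSqZeroExt.inl qk - TrivSqZeroExt.inr (((a - b) / (a + b)) • qi)) *
        (-TrivSqZeroExt.inl qk +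
          TrivSqZeroExt.inr ((2 * (a + b))⁻¹ • ((2 * (a - b)) • qi - (a + b) ^ 2 • qj))) +
      (-TrivSqZeroExt.inl qk - TrivSqZeroExt.inr (qi - ((a - b) / 2) • qj)) *
        (TrivSqZeroExt.inl qk + TrivSqZeroExt.inr qi) : DH) =
      0 * -TrivSqZeroExt.inr (b • qj) + 1 + (1 + TrivSqZeroExt.inr (a • qi)) := by
    ext <;> simp [Quaternion.ext_iff, Quaternion.re_mul, Quaternion.imI_mul,
      Quaternion.imJ_mul, Quaternion.imK_mul, Quaternion.re_one, Quaternion.imI_one,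
      Quaternion.imJ_one, Quaternion.imK_one] <;> field_simp <;> ring
  have c1 : ((TrivSqZeroExt.inl qk - TrivSqZeroExt.inr (((a - b) / (a + b)) • qi) +
          (-TrivSqZeroExt.inl qk +
            TrivSqZeroExt.inr ((2 * (a + b))⁻¹ • ((2 * (a - b)) • qi - (a + b) ^ 2 • qj)))) *
        ((-TrivSqZeroExt.inl qk - TrivSqZeroExt.inr (qi - ((a - b) / 2) • qj)) *
          (TrivSqZeroExt.inl qk + TrivSqZeroExt.inr qi)) +
      (TrivSqZeroExt.inl qk - TrivSqZeroExt.inr (((a - b) / (a + b)) • qi)) *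
          (-TrivSqZeroExt.inl qk +
            TrivSqZeroExt.inr ((2 * (a + b))⁻¹ • ((2 * (a - b)) • qi - (a + b) ^ 2 • qj))) *
        (-TrivSqZeroExt.inl qk - TrivSqZeroExt.inr (qi - ((a - b) / 2) • qj) +
          (TrivSqZeroExt.inl qk + TrivSqZeroExt.inr qi)) : DH) =
      0 * (1 + TrivSqZeroExt.inr (a • qi)) + 1 * -TrivSqZeroExt.inr (b • qj) := by
    ext <;> simp [Quaternion.ext_iff, Quaternion.re_mul, Quaternion.imI_mul,
      Quaternion.imJ_mul, Quaternion.imK_mul, Quaternion.re_one, Quaternion.imI_one,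
      Quaternion.imJ_one, Quaternion.imK_one] <;> field_simp <;> ring
  have c0 : ((TrivSqZeroExt.inl qk - TrivSqZeroExt.inr (((a - b) / (a + b)) • qi)) *
        (-TrivSqZeroExt.inl qk +
          TrivSqZeroExt.inr ((2 * (a + b))⁻¹ • ((2 * (a - b)) • qi - (a + b) ^ 2 • qj))) *
      ((-TrivSqZeroExt.inl qk - TrivSqZeroExt.inr (qi - ((a - b) / 2) • qj)) *
        (TrivSqZeroExt.inl qk + TrivSqZeroExt.inr qi)) : DH) =
      1 * (1 + TrivSqZeroExt.inr (a • qi)) := by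
    ext <;> simp [Quaternion.ext_iff, Quaternion.re_mul, Quaternion.imI_mul,
      Quaternion.imJ_mul, Quaternion.imK_mul, Quaternion.re_one, Quaternion.imI_one,
      Quaternion.imJ_one, Quaternion.imK_one] <;> field_simp <;> ring
  rw [c3, c2, c1, c0]
end
end

section
/- Let h₁, h₂, p, f, g, q, r ∈ DH be such that each x among these seven elements satisfies x + x̄ ∈ ℝ and x·x̄ ∈ ℝ (so each t − x is a linear motion polynomial). Suppose the two 'Bennett flip' identities (t − h₁)·(t − p) = (t − f)·(t − g) and (t − h̄₂)·(t − p) = (t − q)·(t − r̄) hold in DH[t]. Then the product (t − h₁)·(t − h₂)·(t − q)·(t − r̄)·(t − ḡ)·(t − f̄) is a polynomial with only real scalar coefficients; in fact it equals (t − h₂)(t − h̄₂)·(t − g)(t − ḡ)·(t − f)(t − f̄). (This is the loop closure of the over-constrained 6R linkage obtained from Bennett flips.) -/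
open Polynomial
noncomputable section

/-- A dual quaternion `x` gives a linear motion polynomial `t - x` if
`x + x̄ ∈ ℝ` and `x·x̄ ∈ ℝ`. -/
def IsMotionQuat (x : DH) : Prop :=
  (∃ r : ℝ, x + dconj x = algebraMap ℝ DH r) ∧ (∃ r : ℝ, x * dconj x = algebraMap ℝ DH r)


lemma central_real (rp : Polynomial ℝ) (P : Polynomial DH) :
    Commute (rp.map (algebraMap ℝ DH)) P := by
  induction rp using Polynomial.induction_on' with
  | add a b ha hb => simpa [Polynomial.map_add] using ha.add_left hb
  | monomial n a =>
    rw [Polynomial.map_monomial, ← Polynomial.C_mul_X_pow_eq_monomial]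
    have h1 : Commute (Polynomial.C (algebraMap ℝ DH a)) P := by
      rw [← Polynomial.algebraMap_apply]
      exact Algebra.commutes a P
    have h2 : Commute (X : Polynomial DH) P := Polynomial.X_mul
    exact h1.mul_left (h2.pow_left n)

lemma quad_real (x : DH) (hx : IsMotionQuat x) :
    ∃ rp : Polynomial ℝ,
      ((X : Polynomial DH) - Polynomial.C x) * (X - Polynomial.C (dconj x)) =
        rp.map (algebraMap ℝ DH) := by
  obtain ⟨⟨s, hs⟩, n, hn⟩ := hx
  refine ⟨X ^ 2 - Polynomial.C s * X + Polynomial.C n, ?_⟩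
  have cc : (X : Polynomial DH) * Polynomial.C (dconj x) = Polynomial.C (dconj x) * X :=
    Polynomial.X_mul
  have expand : ((X : Polynomial DH) - Polynomial.C x) * (X - Polynomial.C (dconj x)) =
      X ^ 2 - Polynomial.C (x + dconj x) * X + Polynomial.C (x * dconj x) := by
    rw [sub_mul, mul_sub, mul_sub, cc, Polynomial.C_add, add_mul, Polynomial.C_mul, sq]
    abel
  rw [expand, hs, hn]
  simp [Polynomial.map_add, Polynomial.map_sub, Polynomial.map_mul, Polynomial.map_pow]

/-- Loop closure of the 6R linkage obtained from two Bennett flips: if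
`(t-h₁)(t-p) = (t-f)(t-g)` and `(t-h̄₂)(t-p) = (t-q)(t-r̄)`, then
`(t-h₁)(t-h₂)(t-q)(t-r̄)(t-ḡ)(t-f̄)` equals
`(t-h₂)(t-h̄₂)·(t-g)(t-ḡ)·(t-f)(t-f̄)` and has only real scalar coefficients. -/
theorem bennett_flip_loop_closure (h₁ h₂ p f g q r : DH)
    (hh₁ : IsMotionQuat h₁) (hh₂ : IsMotionQuat h₂) (hp : IsMotionQuat p)
    (hf : IsMotionQuat f) (hg : IsMotionQuat g) (hq : IsMotionQuat q)
    (hr : IsMotionQuat r)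
    (flip₁ : ((X : Polynomial DH) - Polynomial.C h₁) * (X - Polynomial.C p) =
      (X - Polynomial.C f) * (X - Polynomial.C g))
    (flip₂ : ((X : Polynomial DH) - Polynomial.C (dconj h₂)) * (X - Polynomial.C p) =
      (X - Polynomial.C q) * (X - Polynomial.C (dconj r))) :
    IsRealPoly
      (((X : Polynomial DH) - Polynomial.C h₁) * (X - Polynomial.C h₂) *
        (X - Polynomial.C q) * (X - Polynomial.C (dconj r)) *
        (X - Polynomial.C (dconj g)) * (X - Polynomial.C (dconj f))) ∧
    ((X : Polynomial DH) - Polynomial.C h₁) * (X - Polynomial.C h₂) *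
        (X - Polynomial.C q) * (X - Polynomial.C (dconj r)) *
        (X - Polynomial.C (dconj g)) * (X - Polynomial.C (dconj f)) =
      ((X - Polynomial.C h₂) * (X - Polynomial.C (dconj h₂))) *
        ((X - Polynomial.C g) * (X - Polynomial.C (dconj g))) *
        ((X - Polynomial.C f) * (X - Polynomial.C (dconj f))) := by
  set A : Polynomial DH := X - Polynomial.C h₁ with hA
  set B : Polynomial DH := X - Polynomial.C h₂ with hB
  set B' : Polynomial DH := X - Polynomial.C (dconj h₂) with hB'
  set Pp : Polynomial DH := X - Polynomial.C p with hPp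
  set F : Polynomial DH := X - Polynomial.C f with hF
  set F' : Polynomial DH := X - Polynomial.C (dconj f) with hF'
  set G : Polynomial DH := X - Polynomial.C g with hG
  set G' : Polynomial DH := X - Polynomial.C (dconj g) with hG'
  set Q : Polynomial DH := X - Polynomial.C q with hQ
  set R' : Polynomial DH := X - Polynomial.C (dconj r) with hR'
  obtain ⟨r2, hr2⟩ := quad_real h₂ hh₂
  obtain ⟨rg, hrg⟩ := quad_real g hg
  obtain ⟨rf, hrf⟩ := quad_real f hf
  rw [← hB, ← hB'] at hr2
  rw [← hG, ← hG'] at hrg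
  rw [← hF, ← hF'] at hrf
  have c2 : ∀ P : Polynomial DH, (B * B') * P = P * (B * B') := by
    intro P; rw [hr2]; exact central_real r2 P
  have cg : ∀ P : Polynomial DH, (G * G') * P = P * (G * G') := by
    intro P; rw [hrg]; exact central_real rg P
  have key : A * B * Q * R' * G' * F' = (B * B') * (G * G') * (F * F') := by
    calc A * B * Q * R' * G' * F'
        = A * B * (Q * R') * (G' * F') := by simp only [mul_assoc]
      _ = A * B * (B' * Pp) * (G' * F') := by rw [← flip₂]
      _ = (A * (B * B')) * Pp * (G' * F') := by simp only [mul_assoc]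
      _ = ((B * B') * A) * Pp * (G' * F') := by rw [← c2 A]
      _ = (B * B') * (A * Pp) * (G' * F') := by simp only [mul_assoc]
      _ = (B * B') * (F * G) * (G' * F') := by rw [flip₁]
      _ = (B * B') * (F * ((G * G') * F')) := by simp only [mul_assoc]
      _ = (B * B') * (F * (F' * (G * G'))) := by rw [cg F']
      _ = (B * B') * ((F * F') * (G * G')) := by simp only [mul_assoc]
      _ = (B * B') * ((G * G') * (F * F')) := by rw [cg (F * F')]
      _ = (B * B') * (G * G') * (F * F') := by simp only [mul_assoc]
  refine ⟨⟨r2 * rg * rf, ?_⟩, key⟩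
  rw [key, hr2, hrg, hrf, Polynomial.map_mul, Polynomial.map_mul]
end
end

section
/- Every monic polynomial P ∈ ℍ[t] of degree n over the real quaternions factors into monic linear factors: there exist q₁, …, qₙ ∈ ℍ with P = (t − q₁)·(t − q₂)⋯(t − qₙ). (In particular, factorization into linear factors always works for purely spherical rational motions, i.e., motion polynomials with coefficients in ℍ.) -/
open Polynomial
noncomputable section

namespace QuatFact

variable {R : Type*} [Ring R]

/-- Left evaluation of a polynomial: `Σ qᵏ * aₖ`. -/
def lev (q : R) (P : R[X]) : R := P.sum fun k a => q ^ k * a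

lemma lev_add (q : R) (F G : R[X]) : lev q (F + G) = lev q F + lev q G :=
  Polynomial.sum_add_index F G _ (by simp) (by intros; rw [mul_add])

lemma lev_monomial (q a : R) (n : ℕ) : lev q (monomial n a) = q ^ n * a :=
  Polynomial.sum_monomial_index a _ (by simp)

lemma lev_mul_eq (q : R) (F G : R[X]) :
    lev q (F * G) = G.sum fun j b => q ^ j * lev q F * b := by
  induction G using Polynomial.induction_on' with
  | add p r ih1 ih2 =>
      rw [mul_add, lev_add, ih1, ih2,
        Polynomial.sum_add_index p r _ (by simp) (by intros; rw [mul_add])]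
  | monomial j b =>
      rw [Polynomial.sum_monomial_index b _ (by simp)]
      induction F using Polynomial.induction_on' with
      | add p r ih1 ih2 => rw [add_mul, lev_add, ih1, ih2, lev_add, mul_add, add_mul]
      | monomial i a =>
          rw [monomial_mul_monomial, lev_monomial, lev_monomial, pow_add,
            pow_mul_comm, mul_assoc, mul_assoc, mul_assoc]

lemma lev_X_sub_C_self (a : R) : lev a (X - C a) = 0 := by
  have h : (X : R[X]) - C a = monomial 1 1 + monomial 0 (-a) := by
    rw [monomial_one_one_eq_X, monomial_zero_left, map_neg, sub_eq_add_neg]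
  rw [h, lev_add, lev_monomial, lev_monomial]
  simp

lemma lev_X_sub_C_mul (a : R) (Q : R[X]) : lev a ((X - C a) * Q) = 0 := by
  rw [lev_mul_eq, lev_X_sub_C_self]
  simp [Polynomial.sum]

lemma eq_X_sub_C_mul_of_lev [Nontrivial R] {a : R} {P : R[X]} (h : lev a P = 0) :
    P = (X - C a) * (P /ₘ (X - C a)) := by
  have hm : (X - C a).Monic := monic_X_sub_C a
  have hmd := modByMonic_add_div P (X - C a)
  have hdeg : degree (P %ₘ (X - C a)) < 1 := by
    simpa [degree_X_sub_C] using degree_modByMonic_lt P hm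
  have hC : P %ₘ (X - C a) = C ((P %ₘ (X - C a)).coeff 0) :=
    eq_C_of_degree_le_zero (by exact_mod_cast Nat.WithBot.lt_one_iff_le_zero.mp hdeg)
  have h0 : (P %ₘ (X - C a)).coeff 0 = 0 := by
    have := congrArg (lev a) hmd
    rw [lev_add, lev_X_sub_C_mul, add_zero, hC, h] at this
    have hc : lev a (C ((P %ₘ (X - C a)).coeff 0)) = (P %ₘ (X - C a)).coeff 0 := by
      rw [← monomial_zero_left, lev_monomial, pow_zero, one_mul]
    rw [hc] at this
    exact this
  conv_lhs => rw [← hmd, hC, h0]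
  rw [map_zero, zero_add]

variable [StarRing R]

/-- Coefficient-wise star of a polynomial (an anti-automorphism). -/
def conjP (P : R[X]) : R[X] := P.sum fun k a => monomial k (star a)

lemma conjP_add (F G : R[X]) : conjP (F + G) = conjP F + conjP G :=
  Polynomial.sum_add_index F G _ (by simp) (by intros; rw [star_add, map_add])

lemma conjP_monomial (n : ℕ) (a : R) : conjP (monomial n a) = monomial n (star a) :=
  Polynomial.sum_monomial_index a _ (by simp)

lemma conjP_conjP (P : R[X]) : conjP (conjP P) = P := by
  induction P using Polynomial.induction_on' with
  | add p r ih1 ih2 => rw [conjP_add, conjP_add, ih1, ih2]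
  | monomial n a => rw [conjP_monomial, conjP_monomial, star_star]

lemma conjP_mul (F G : R[X]) : conjP (F * G) = conjP G * conjP F := by
  induction G using Polynomial.induction_on' with
  | add p r ih1 ih2 => rw [mul_add, conjP_add, ih1, ih2, conjP_add, add_mul]
  | monomial j b =>
      induction F using Polynomial.induction_on' with
      | add p r ih1 ih2 =>
          rw [add_mul, conjP_add, ih1, ih2, conjP_add, mul_add]
      | monomial i a =>
          rw [monomial_mul_monomial, conjP_monomial, conjP_monomial, conjP_monomial,
            monomial_mul_monomial, star_mul, add_comm]

lemma coeff_conjP (P : R[X]) (k : ℕ) : (conjP P).coeff k = star (P.coeff k) := by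
  induction P using Polynomial.induction_on' with
  | add p r ih1 ih2 => rw [conjP_add, coeff_add, ih1, ih2, coeff_add, star_add]
  | monomial n a =>
      rw [conjP_monomial, coeff_monomial, coeff_monomial, apply_ite star, star_zero]

lemma conjP_X_sub_C (a : R) : conjP (X - C a) = X - C (star a) := by
  have h : (X : R[X]) - C a = monomial 1 1 + monomial 0 (-a) := by
    rw [monomial_one_one_eq_X, monomial_zero_left, map_neg, sub_eq_add_neg]
  have h' : (X : R[X]) - C (star a) = monomial 1 1 + monomial 0 (-star a) := by
    rw [monomial_one_one_eq_X, monomial_zero_left, map_neg, sub_eq_add_neg]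
  rw [h, h', conjP_add, conjP_monomial, conjP_monomial, star_one, star_neg]

lemma support_conjP (P : R[X]) : (conjP P).support = P.support := by
  ext k
  simp [mem_support_iff, coeff_conjP, star_eq_zero]

lemma degree_conjP (P : R[X]) : (conjP P).degree = P.degree := by
  unfold Polynomial.degree
  rw [support_conjP]

lemma natDegree_conjP (P : R[X]) : (conjP P).natDegree = P.natDegree := by
  unfold Polynomial.natDegree
  rw [degree_conjP]

lemma monic_conjP {P : R[X]} (h : P.Monic) : (conjP P).Monic := by
  unfold Polynomial.Monic Polynomial.leadingCoeff
  rw [natDegree_conjP, coeff_conjP, h.coeff_natDegree, star_one]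

end QuatFact

open QuatFact

/-- The inclusion ℂ → ℍ as an ℝ-algebra map. -/
def cq : ℂ →ₐ[ℝ] Quaternion ℝ where
  toFun z := ⟨z.re, z.im, 0, 0⟩
  map_one' := by
    change (⟨(1:ℂ).re, (1:ℂ).im, 0, 0⟩ : Quaternion ℝ) = 1
    ext <;> simp
  map_mul' x y := by
    change (⟨(x*y).re, (x*y).im, 0, 0⟩ : Quaternion ℝ) = (⟨x.re, x.im, 0, 0⟩ : Quaternion ℝ) * ⟨y.re, y.im, 0, 0⟩
    ext <;> simp [Quaternion.ext_iff] <;> ring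
  map_zero' := by
    change (⟨(0:ℂ).re, (0:ℂ).im, 0, 0⟩ : Quaternion ℝ) = 0
    ext <;> simp
  map_add' x y := by
    change (⟨(x+y).re, (x+y).im, 0, 0⟩ : Quaternion ℝ) = (⟨x.re, x.im, 0, 0⟩ : Quaternion ℝ) + ⟨y.re, y.im, 0, 0⟩
    ext <;> simp
  commutes' r := by
    ext <;> simp [QuaternionAlgebra.algebraMap_eq]

lemma lev_map_real (q : Quaternion ℝ) (p : ℝ[X]) :
    lev q (p.map (algebraMap ℝ (Quaternion ℝ))) = aeval q p := by
  induction p using Polynomial.induction_on' with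
  | add p r ih1 ih2 => rw [Polynomial.map_add, lev_add, ih1, ih2, map_add]
  | monomial n a =>
      rw [Polynomial.map_monomial, lev_monomial, aeval_monomial, Algebra.commutes]

/-- Every monic polynomial of degree `n` over the real quaternions factors into
monic linear factors `(t − q₁)(t − q₂)⋯(t − qₙ)`. -/
theorem quaternion_polynomial_factorization (n : ℕ) (P : Polynomial (Quaternion ℝ))
    (hP : P.Monic) (hdeg : P.natDegree = n) :
    ∃ q : Fin n → Quaternion ℝ,
      P = (List.ofFn fun i => X - Polynomial.C (q i)).prod := by
  induction n generalizing P with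
  | zero =>
      refine ⟨Fin.elim0, ?_⟩
      have h1 : P = 1 := hP.natDegree_eq_zero.mp hdeg
      simp [h1]
  | succ n ih =>
      -- the real polynomial N = conjP P * P
      set N : Polynomial (Quaternion ℝ) := conjP P * P with hN
      have hPc : (conjP P).Monic := monic_conjP hP
      have hNm : N.Monic := hPc.mul hP
      have hNself : conjP N = N := by rw [hN, conjP_mul, conjP_conjP]
      have hNdeg : N.natDegree = 2 * (n + 1) := by
        rw [hN, hPc.natDegree_mul hP, natDegree_conjP, hdeg]; ring
      -- N comes from a real polynomial Nr
      have hlift : N ∈ Polynomial.lifts (algebraMap ℝ (Quaternion ℝ)) := by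
        rw [Polynomial.lifts_iff_coeff_lifts]
        intro k
        have : star (N.coeff k) = N.coeff k := by
          conv_rhs => rw [← hNself]
          rw [coeff_conjP]
        refine ⟨(N.coeff k).re, ?_⟩
        have hcoe : (algebraMap ℝ (Quaternion ℝ)) (N.coeff k).re
            = ((N.coeff k).re : Quaternion ℝ) := congrFun QuaternionAlgebra.coe_algebraMap _
        rw [hcoe]
        exact (Quaternion.star_eq_self.mp this).symm
      obtain ⟨Nr, hNr⟩ := (Polynomial.mem_lifts _).mp hlift
      have hinj : Function.Injective (algebraMap ℝ (Quaternion ℝ)) :=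
        (algebraMap ℝ (Quaternion ℝ)).injective
      have hNrdeg : 0 < Nr.degree := by
        have h1 : Nr.natDegree = 2 * (n + 1) := by
          rw [← hNdeg, ← hNr, natDegree_map_eq_of_injective hinj]
        have : 0 < Nr.natDegree := by omega
        exact natDegree_pos_iff_degree_pos.mp this
      -- complex root of Nr
      obtain ⟨z, hz⟩ := Complex.exists_root (f := Nr.map (algebraMap ℝ ℂ))
        (by rwa [degree_map_eq_of_injective (algebraMap ℝ ℂ).injective])
      set q₀ : Quaternion ℝ := cq z with hq₀
      have hroot : lev q₀ N = 0 := by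
        rw [← hNr, lev_map_real, aeval_algHom_apply cq z Nr]
        have : (aeval z) Nr = 0 := by
          rwa [aeval_def, ← Polynomial.eval_map]
        rw [this, map_zero]
      -- case split on f = lev q₀ (conjP P)
      by_cases hf : lev q₀ (conjP P) = 0
      · -- conjP P = (X - C q₀) * Q, so P = conjP Q * (X - C (star q₀))
        set Q := conjP P /ₘ (X - C q₀) with hQdef
        have hfac : conjP P = (X - C q₀) * Q := eq_X_sub_C_mul_of_lev hf
        have hPfac : P = conjP Q * (X - C (star q₀)) := by
          rw [← conjP_conjP P, hfac, conjP_mul, conjP_X_sub_C]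
        have hQm : (conjP Q).Monic := by
          refine Polynomial.Monic.of_mul_monic_right (monic_X_sub_C (star q₀)) ?_
          rwa [← hPfac]
        have hQdeg : (conjP Q).natDegree = n := by
          have h2 := hQm.natDegree_mul (monic_X_sub_C (star q₀))
          rw [← hPfac, hdeg, natDegree_X_sub_C] at h2
          omega
        obtain ⟨q', hq'⟩ := ih (conjP Q) hQm hQdeg
        refine ⟨Fin.snoc q' (star q₀), ?_⟩
        rw [List.ofFn_succ']
        simp only [Fin.snoc_castSucc, Fin.snoc_last, List.prod_concat]
        rw [← hq', ← hPfac]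
      · -- a left root w of P
        set f := lev q₀ (conjP P) with hfdef
        set w : Quaternion ℝ := f⁻¹ * q₀ * f with hw
        have key : f * w = q₀ * f := by
          rw [hw, ← mul_assoc, ← mul_assoc, mul_inv_cancel₀ hf, one_mul]
        have hpow : ∀ j : ℕ, q₀ ^ j * f = f * w ^ j := by
          intro j
          induction j with
          | zero => simp
          | succ j ihj =>
              calc q₀ ^ (j + 1) * f = q₀ * (q₀ ^ j * f) := by rw [pow_succ', mul_assoc]
                _ = q₀ * f * w ^ j := by rw [ihj, ← mul_assoc]
                _ = f * w * w ^ j := by rw [key]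
                _ = f * w ^ (j + 1) := by rw [mul_assoc, ← pow_succ']
        have h1 := lev_mul_eq q₀ (conjP P) P
        rw [← hN, hroot, ← hfdef] at h1
        have hzero : f * lev w P = 0 := by
          have h2 : f * lev w P = P.sum fun j b => q₀ ^ j * f * b := by
            unfold lev Polynomial.sum
            rw [Finset.mul_sum]
            refine Finset.sum_congr rfl fun j _ => ?_
            simp only [← mul_assoc, ← hpow j]
          rw [h2, ← h1]
        have hlw : lev w P = 0 := by
          rcases mul_eq_zero.mp hzero with h | h
          · exact absurd h hf
          · exact h
        set Q := P /ₘ (X - C w) with hQdef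
        have hfac : P = (X - C w) * Q := eq_X_sub_C_mul_of_lev hlw
        have hQm : Q.Monic := by
          refine Polynomial.Monic.of_mul_monic_left (monic_X_sub_C w) ?_
          rwa [← hfac]
        have hQdeg : Q.natDegree = n := by
          have h2 := (monic_X_sub_C w).natDegree_mul hQm
          rw [← hfac, hdeg, natDegree_X_sub_C] at h2
          omega
        obtain ⟨q', hq'⟩ := ih Q hQm hQdeg
        refine ⟨Fin.cons w q', ?_⟩
        rw [List.ofFn_succ]
        simp only [Fin.cons_zero, Fin.cons_succ, List.prod_cons]
        rw [← hq', ← hfac]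
end
end
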